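/- arXiv:1007.1333 — 10 statements merged into one kernel-verified Lean document; each statement's English description precedes it below -/
import Mathlib

section
/- Let G = (V, E) be a finite simple graph and let k be a natural number. Let G' be the simple graph on the vertex set V ⊕ {v, v'} (two new vertices v and v') whose edge set consists of all edges of G together with all edges {w, v} for w ∈ V ⊕ {v'}. Then G' is connected and has more than one vertex, and G has a vertex cover of cardinality at most k if and only if G' has a vertex cover of cardinality at most k + 1. -/
def IsVertexCover {V : Type} (G : SimpleGraph V) (C : Finset V) : Prop :=
  ∀ a b, G.Adj a b → a ∈ C ∨ b ∈ C

def extGraph {V : Type} (G : SimpleGraph V) : SimpleGraph (V ⊕ Bool) :=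
  SimpleGraph.fromRel (fun x y =>
    (∃ a b, x = Sum.inl a ∧ y = Sum.inl b ∧ G.Adj a b) ∨
    (x = Sum.inr true ∧ y ≠ Sum.inr true))

lemma extGraph_adj {V : Type} (G : SimpleGraph V) (x y : V ⊕ Bool) :
    (extGraph G).Adj x y ↔ x ≠ y ∧
      ((∃ a b, x = Sum.inl a ∧ y = Sum.inl b ∧ G.Adj a b) ∨
       (x = Sum.inr true ∧ y ≠ Sum.inr true) ∨
       (y = Sum.inr true ∧ x ≠ Sum.inr true)) := by
  simp only [extGraph, SimpleGraph.fromRel_adj]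
  constructor
  · rintro ⟨hne, (⟨a,b,rfl,rfl,hab⟩|⟨rfl,hy⟩)|(⟨a,b,rfl,rfl,hab⟩|⟨rfl,hx⟩)⟩
    · exact ⟨hne, Or.inl ⟨a,b,rfl,rfl,hab⟩⟩
    · exact ⟨hne, Or.inr (Or.inl ⟨rfl,hy⟩)⟩
    · exact ⟨hne, Or.inl ⟨b,a,rfl,rfl,hab.symm⟩⟩
    · exact ⟨hne, Or.inr (Or.inr ⟨rfl,hx⟩)⟩
  · rintro ⟨hne, (⟨a,b,rfl,rfl,hab⟩|⟨rfl,hy⟩|⟨rfl,hx⟩)⟩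
    · exact ⟨hne, Or.inl (Or.inl ⟨a,b,rfl,rfl,hab⟩)⟩
    · exact ⟨hne, Or.inl (Or.inr ⟨rfl,hy⟩)⟩
    · exact ⟨hne, Or.inr (Or.inr ⟨rfl,hx⟩)⟩

lemma adj_top {V : Type} (G : SimpleGraph V) (x : V ⊕ Bool) (hx : x ≠ Sum.inr true) :
    (extGraph G).Adj x (Sum.inr true) := by
  rw [extGraph_adj]
  exact ⟨hx, Or.inr (Or.inr ⟨rfl, hx⟩)⟩

theorem vertexCover_extGraph {V : Type} [Fintype V] (G : SimpleGraph V) (k : ℕ) :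
    (extGraph G).Connected ∧ 1 < Fintype.card (V ⊕ Bool) ∧
    ((∃ C : Finset V, IsVertexCover G C ∧ C.card ≤ k) ↔
      (∃ C : Finset (V ⊕ Bool), IsVertexCover (extGraph G) C ∧ C.card ≤ k + 1)) := by
  classical
  refine ⟨?_, ?_, ?_, ?_⟩
  · rw [SimpleGraph.connected_iff_exists_forall_reachable]
    refine ⟨Sum.inr true, fun x => ?_⟩
    by_cases hx : x = Sum.inr true
    · subst hx; rfl
    · exact ((adj_top G x hx).reachable).symm
  · simp [Fintype.card_sum]
  · rintro ⟨C, hC, hcard⟩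
    refine ⟨insert (Sum.inr true) (C.image Sum.inl), ?_, ?_⟩
    · intro a b hab
      rw [extGraph_adj] at hab
      rcases hab with ⟨hne, h⟩
      rcases h with ⟨u, w, rfl, rfl, huw⟩ | ⟨rfl, _⟩ | ⟨rfl, _⟩
      · rcases hC u w huw with h | h
        · left; simp [h]
        · right; simp [h]
      · left; simp
      · right; simp
    · calc (insert (Sum.inr true) (C.image Sum.inl)).card
          ≤ (C.image Sum.inl).card + 1 := Finset.card_insert_le _ _
        _ ≤ k + 1 := by
            have := Finset.card_image_le (f := (Sum.inl : V → V ⊕ Bool)) (s := C)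
            omega
  · rintro ⟨C, hC, hcard⟩
    -- v = inr true and v' = inr false are adjacent, so one is in C
    have hvv' : (extGraph G).Adj (Sum.inr false) (Sum.inr true) :=
      adj_top G _ (by simp)
    have hmem : Sum.inr false ∈ C ∨ Sum.inr true ∈ C := hC _ _ hvv'
    have hb : ∃ b : Bool, Sum.inr b ∈ C := by
      rcases hmem with h | h
      exacts [⟨false, h⟩, ⟨true, h⟩]
    obtain ⟨b, hb⟩ := hb
    refine ⟨C.preimage Sum.inl Sum.inl_injective.injOn, ?_, ?_⟩
    · intro u w huw
      have : (extGraph G).Adj (Sum.inl u) (Sum.inl w) := by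
        rw [extGraph_adj]
        exact ⟨by simp [huw.ne], Or.inl ⟨u, w, rfl, rfl, huw⟩⟩
      rcases hC _ _ this with h | h
      · left; simpa using h
      · right; simpa using h
    · have h1 : (C.preimage Sum.inl Sum.inl_injective.injOn).card
          = (C.filter (fun x => ∃ u, Sum.inl u = x)).card := by
        rw [Finset.card_preimage]
        congr 1
      have h2 : (C.filter (fun x => ∃ u, Sum.inl u = x)).card < C.card := by
        apply Finset.card_lt_card
        refine ⟨Finset.filter_subset _ _, fun hsub => ?_⟩
        have := hsub hb
        simp at this
      omega
end

section
/- Let G_{v₀} = (V, E) be a nice graph and let B be a deterministic Büchi automaton over V_♮ with L_B(B) = L(G_{v₀}). Then: (1) no state of B is both a v-state for some v ∈ V and a w♮-state for some w ∈ V; (2) for all v, w ∈ V with v ≠ w, no state is both a v-state and a w-state; (3) for all v, w ∈ V with v ≠ w, no state is both a v♮-state and a w♮-state. -/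
/-- The run of the deterministic automaton `M` from state `q` on the infinite
word `x`. -/
def DFA.runFrom {α σ : Type*} (M : DFA α σ) (q : σ) (x : ℕ → α) : ℕ → σ
  | 0 => q
  | n + 1 => M.step (M.runFrom q x n) (x n)

/-- The Büchi language of a deterministic automaton: the set of infinite words
whose run from the initial state visits the accepting set infinitely often. -/
def BuchiLang {α σ : Type*} (M : DFA α σ) : Set (ℕ → α) :=
  {x | {n | M.runFrom M.start x n ∈ M.accept}.Infinite}

/-- `w` is a finite word of the form `v₀^{i₀} v₁^{i₁} ⋯ v_n^{i_n}` where
`v₀ v₁ ⋯ v_n` is a path in `G` starting at the distinguished vertex `v₀`, with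
`n ≥ 0`, `i₀ ≥ 0`, `i_j ≥ 1` for `1 ≤ j ≤ n`, and last vertex `v_n = u`. -/
def IsStutterPath {V : Type} (G : SimpleGraph V) (v₀ : V) (w : List V) (u : V) : Prop :=
  ∃ (n : ℕ) (v : ℕ → V) (i : ℕ → ℕ),
    v 0 = v₀ ∧ (∀ j, j < n → G.Adj (v j) (v (j + 1))) ∧
    (∀ j, 1 ≤ j → j ≤ n → 1 ≤ i j) ∧ v n = u ∧
    w = ((List.range (n + 1)).map (fun j => List.replicate (i j) (v j))).flatten

/-- Trace-words: infinite words `v₀^{i₀} v₁^{i₁} v₂^{i₂} ⋯ ∈ V^ω` with `i₀ ≥ 0`,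
`i_j ≥ 1` for `j ≥ 1`, along an infinite path `v₀ v₁ v₂ ⋯` of `G` starting at `v₀`.
The function `f` assigns to each position of the word the index of its block. -/
def IsTraceWord {V : Type} (G : SimpleGraph V) (v₀ : V) (α : ℕ → V ⊕ Unit) : Prop :=
  ∃ (v : ℕ → V) (f : ℕ → ℕ),
    v 0 = v₀ ∧ (∀ j, G.Adj (v j) (v (j + 1))) ∧
    f 0 ≤ 1 ∧ (∀ n, f n ≤ f (n + 1) ∧ f (n + 1) ≤ f n + 1) ∧
    (∀ m, ∃ n, m ≤ f n) ∧ (∀ n, α n = Sum.inl (v (f n)))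

/-- ♮-words: infinite words over `V ⊕ {♮}` (with `♮ = Sum.inr ()`) having a
prefix of the form `v₀^{i₀} v₁^{i₁} ⋯ v_n^{i_n} ♮ v_n`. -/
def IsNaturalWord {V : Type} (G : SimpleGraph V) (v₀ : V) (α : ℕ → V ⊕ Unit) : Prop :=
  ∃ (w : List V) (u : V), IsStutterPath G v₀ w u ∧
    (∀ k : Fin w.length, α k = Sum.inl (w.get k)) ∧
    α w.length = Sum.inr () ∧ α (w.length + 1) = Sum.inl u

/-- The characteristic language of the nice graph `G` with initial vertex `v₀`. -/
def CharLang {V : Type} (G : SimpleGraph V) (v₀ : V) : Set (ℕ → V ⊕ Unit) :=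
  {α | IsTraceWord G v₀ α ∨ IsNaturalWord G v₀ α}

/-- `q` is a `v`-state of `B`: it is reached from the initial state on some
finite word `v₀^{i₀} v₁^{i₁} ⋯ v_n^{i_n} ∈ V^*` along a path of `G` ending in `v`. -/
def IsVState {V σ : Type} (G : SimpleGraph V) (v₀ : V) (B : DFA (V ⊕ Unit) σ)
    (v : V) (q : σ) : Prop :=
  ∃ w : List V, IsStutterPath G v₀ w v ∧ B.eval (w.map Sum.inl) = q

/-- `q` is a `v♮`-state of `B`: it is reached from some `v`-state upon reading `♮`. -/
def IsNatState {V σ : Type} (G : SimpleGraph V) (v₀ : V) (B : DFA (V ⊕ Unit) σ)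
    (v : V) (q : σ) : Prop :=
  ∃ q', IsVState G v₀ B v q' ∧ q = B.step q' (Sum.inr ())


section Aux

variable {A σ : Type*}

def extWord (u : List A) (β : ℕ → A) : ℕ → A := fun n =>
  if h : n < u.length then u.get ⟨n, h⟩ else β (n - u.length)

lemma extWord_lt (u : List A) (β : ℕ → A) {n : ℕ} (h : n < u.length) :
    extWord u β n = u.get ⟨n, h⟩ := dif_pos h

lemma extWord_ge (u : List A) (β : ℕ → A) {n : ℕ} (h : u.length ≤ n) :
    extWord u β n = β (n - u.length) := dif_neg (by omega)

lemma runFrom_eq (B : DFA A σ) (s : σ) (x : ℕ → A) :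
    ∀ n, B.runFrom s x n = B.evalFrom s ((List.range n).map x)
  | 0 => rfl
  | n + 1 => by
    show B.step (B.runFrom s x n) (x n) = _
    rw [runFrom_eq B s x n, List.range_succ, List.map_append]
    simp [DFA.evalFrom, List.foldl_append]

lemma range_map_ext (u : List A) (β : ℕ → A) (m : ℕ) :
    (List.range (u.length + m)).map (extWord u β) = u ++ (List.range m).map β := by
  apply List.ext_getElem (by simp)
  intro k h1 h2
  simp only [List.getElem_map, List.getElem_range]
  rcases lt_or_ge k u.length with h | h
  · rw [extWord_lt u β h, List.getElem_append_left h]; rfl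
  · rw [extWord_ge u β h, List.getElem_append_right h, List.getElem_map, List.getElem_range]

lemma infinite_shift (P : ℕ → Prop) (L : ℕ) :
    {n | P n}.Infinite ↔ {m | P (L + m)}.Infinite := by
  constructor
  · intro h
    apply Set.Infinite.of_image (fun m => L + m)
    refine (h.diff (Set.finite_Iio L)).mono ?_
    rintro n ⟨hn, hn2⟩
    simp only [Set.mem_Iio, not_lt] at hn2
    exact ⟨n - L, by simpa [Nat.add_sub_cancel' hn2] using hn, by simp; omega⟩
  · intro h
    refine (h.image (Set.injOn_of_injective (add_right_injective L))).mono ?_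
    rintro n ⟨m, hm, rfl⟩; exact hm

lemma buchi_ext_iff (B : DFA A σ) (u : List A) (β : ℕ → A) :
    extWord u β ∈ BuchiLang B ↔
      {m | B.evalFrom (B.eval u) ((List.range m).map β) ∈ B.accept}.Infinite := by
  show {n | B.runFrom B.start (extWord u β) n ∈ B.accept}.Infinite ↔ _
  rw [infinite_shift _ u.length]
  have : ∀ m, B.runFrom B.start (extWord u β) (u.length + m)
      = B.evalFrom (B.eval u) ((List.range m).map β) := by
    intro m
    rw [runFrom_eq, range_map_ext]
    simp [DFA.eval, DFA.evalFrom, List.foldl_append]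
  simp_rw [this]

end Aux

section Ext2

variable {V : Type} (w : List V) (x : V ⊕ Unit) (β : ℕ → V ⊕ Unit)

lemma extD {k : ℕ} (hk : k < w.length) :
    extWord (w.map Sum.inl) β k = Sum.inl w[k] := by
  rw [extWord_lt _ _ (by simpa using hk)]; simp

lemma extE {m : ℕ} (hm : w.length ≤ m) :
    extWord (w.map Sum.inl) β m = β (m - w.length) := by
  rw [extWord_ge _ _ (by simpa using hm)]; simp

lemma extA {k : ℕ} (hk : k < w.length) :
    extWord (w.map Sum.inl ++ [x]) β k = Sum.inl w[k] := by
  rw [extWord_lt _ _ (by simp; omega)]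
  rw [List.get_eq_getElem, List.getElem_append_left (by simpa using hk), List.getElem_map]

lemma extB : extWord (w.map Sum.inl ++ [x]) β w.length = x := by
  rw [extWord_lt _ _ (by simp)]
  simp

lemma extC {m : ℕ} (hm : w.length + 1 ≤ m) :
    extWord (w.map Sum.inl ++ [x]) β m = β (m - (w.length + 1)) := by
  rw [extWord_ge _ _ (by simp; omega)]
  simp

end Ext2

section Char

variable {V : Type} {G : SimpleGraph V} {v₀ : V}

lemma stutter_decomp {w : List V} {u : V} (h : IsStutterPath G v₀ w u) :
    (w = [] ∧ u = v₀) ∨ w.getLast? = some u := by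
  obtain ⟨n, v, i, hv0, hadj, hi, hvn, hw⟩ := h
  have hw' : w = ((List.range n).map (fun j => List.replicate (i j) (v j))).flatten
      ++ List.replicate (i n) (v n) := by
    rw [hw, List.range_succ, List.map_append, List.flatten_append]
    simp
  rcases Nat.eq_zero_or_pos (i n) with hin | hin
  · -- last block empty; then n = 0 and w = []
    have hn : n = 0 := by
      by_contra hn
      have := hi n (by omega) le_rfl
      omega
    subst hn
    left
    constructor
    · rw [hw']; simp [hin]
    · rw [← hvn, hv0]
  · right
    rw [hw', List.getLast?_append_of_ne_nil _ (by simp; omega)]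
    have : List.replicate (i n) (v n) = List.replicate (i n - 1) (v n) ++ [v n] := by
      rw [← (List.replicate_succ' : List.replicate (i n - 1 + 1) (v n) = _)]
      congr 1; omega
    rw [this, List.getLast?_append_of_ne_nil _ (by simp)]
    simp [hvn]

lemma stutter_end_eq {w : List V} {u u' : V} (h : IsStutterPath G v₀ w u)
    (h' : IsStutterPath G v₀ w u') : u = u' := by
  rcases stutter_decomp h with ⟨he, rfl⟩ | hl
  · rcases stutter_decomp h' with ⟨_, rfl⟩ | hl'
    · rfl
    · rw [he] at hl'; simp at hl'
  · rcases stutter_decomp h' with ⟨he', rfl⟩ | hl'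
    · rw [he'] at hl; simp at hl
    · rw [hl] at hl'; exact Option.some_injective _ hl'

lemma natWord_mem {w : List V} {v : V}
    (hsp : IsStutterPath G v₀ w v) (x : ℕ → V ⊕ Unit)
    (h1 : ∀ (k : ℕ) (h : k < w.length), x k = Sum.inl w[k])
    (h2 : x w.length = Sum.inr ()) (h3 : x (w.length + 1) = Sum.inl v) :
    x ∈ CharLang G v₀ :=
  Or.inr ⟨w, v, hsp, fun k => by simpa using h1 k k.2, h2, h3⟩

lemma notChar_case1 (L : ℕ) (x : ℕ → V ⊕ Unit)
    (h1 : ∀ k, k < L → ∃ a, x k = Sum.inl a)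
    (h2 : x L = Sum.inr ()) (h3 : x (L + 1) = Sum.inr ()) :
    x ∉ CharLang G v₀ := by
  rintro (⟨vv, f, _, _, _, _, _, hα⟩ | ⟨w', u', hsp', hpre, hnat, hnext⟩)
  · rw [hα L] at h2; simp at h2
  · rcases lt_trichotomy w'.length L with h | h | h
    · obtain ⟨a, ha⟩ := h1 w'.length h; rw [ha] at hnat; simp at hnat
    · rw [h] at hnext; rw [hnext] at h3; simp at h3
    · have := hpre ⟨L, h⟩; simp only [Fin.val_mk] at this; rw [h2] at this; simp at this

lemma notChar_case2 {w : List V} {u v : V}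
    (hsp : IsStutterPath G v₀ w u) (huv : u ≠ v) (x : ℕ → V ⊕ Unit)
    (h1 : ∀ (k : ℕ) (h : k < w.length), x k = Sum.inl w[k])
    (h2 : x w.length = Sum.inr ()) (h3 : x (w.length + 1) = Sum.inl v) :
    x ∉ CharLang G v₀ := by
  rintro (⟨vv, f, _, _, _, _, _, hα⟩ | ⟨w', u', hsp', hpre, hnat, hnext⟩)
  · rw [hα w.length] at h2; simp at h2
  · have hlen : w'.length = w.length := by
      rcases lt_trichotomy w'.length w.length with h | h | h
      · rw [h1 w'.length h] at hnat; simp at hnat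
      · exact h
      · have := hpre ⟨w.length, h⟩; simp only [Fin.val_mk] at this
        rw [h2] at this; simp at this
    have hww : w' = w := by
      apply List.ext_getElem hlen
      intro k hk1 hk2
      have := hpre ⟨k, hk1⟩
      simp only [Fin.val_mk, List.get_eq_getElem] at this
      rw [h1 k hk2] at this
      exact (Sum.inl_injective this).symm
    subst hww
    have : u = u' := stutter_end_eq hsp hsp'
    rw [hlen] at hnext
    rw [hnext] at h3
    exact huv (this.trans (Sum.inl_injective h3))

end Char

theorem vStates_natStates_disjoint {V σ : Type} [Fintype V] [Fintype σ]
    (G : SimpleGraph V) (v₀ : V) (hconn : G.Connected) (hcard : 1 < Fintype.card V)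
    (B : DFA (V ⊕ Unit) σ) (hL : BuchiLang B = CharLang G v₀) :
    (∀ (q : σ) (v w : V), ¬(IsVState G v₀ B v q ∧ IsNatState G v₀ B w q)) ∧
    (∀ (q : σ) (v w : V), v ≠ w → ¬(IsVState G v₀ B v q ∧ IsVState G v₀ B w q)) ∧
    (∀ (q : σ) (v w : V), v ≠ w → ¬(IsNatState G v₀ B v q ∧ IsNatState G v₀ B w q)) := by
  have key : ∀ (u₁ u₂ : List (V ⊕ Unit)) (β : ℕ → V ⊕ Unit), B.eval u₁ = B.eval u₂ →
      extWord u₁ β ∈ CharLang G v₀ → extWord u₂ β ∈ CharLang G v₀ := by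
    intro u₁ u₂ β h
    rw [← hL]
    intro hm
    rw [buchi_ext_iff] at hm ⊢
    rwa [← h]
  have estep : ∀ u : List (V ⊕ Unit),
      B.eval (u ++ [Sum.inr ()]) = B.step (B.eval u) (Sum.inr ()) := by
    intro u; simp [DFA.eval, DFA.evalFrom, List.foldl_append]
  refine ⟨?_, ?_, ?_⟩
  · rintro q v w ⟨⟨wv, hspv, hev⟩, q', ⟨ww, hspw, hew⟩, hq⟩
    have heval : B.eval (wv.map Sum.inl) = B.eval (ww.map Sum.inl ++ [Sum.inr ()]) := by
      rw [estep, hev, hq, hew]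
    have hmem : extWord (wv.map Sum.inl)
        (fun k => if k = 0 then Sum.inr () else Sum.inl v) ∈ CharLang G v₀ :=
      natWord_mem hspv _ (fun k hk => extD _ _ hk) (by rw [extE _ _ le_rfl]; simp)
        (by rw [extE _ _ (by omega)]; simp)
    refine notChar_case1 ww.length _ (fun k hk => ⟨ww[k], extA _ _ _ hk⟩) (extB _ _ _) ?_
      (key _ _ _ heval hmem)
    rw [extC _ _ _ le_rfl]; simp
  · rintro q v w hvw ⟨⟨wv, hspv, hev⟩, ⟨ww, hspw, hew⟩⟩
    have heval : B.eval (wv.map Sum.inl) = B.eval (ww.map Sum.inl) := hev.trans hew.symm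
    have hmem : extWord (wv.map Sum.inl)
        (fun k => if k = 0 then Sum.inr () else Sum.inl v) ∈ CharLang G v₀ :=
      natWord_mem hspv _ (fun k hk => extD _ _ hk) (by rw [extE _ _ le_rfl]; simp)
        (by rw [extE _ _ (by omega)]; simp)
    exact notChar_case2 hspw hvw.symm _ (fun k hk => extD _ _ hk)
      (by rw [extE _ _ le_rfl]; simp) (by rw [extE _ _ (by omega)]; simp)
      (key _ _ _ heval hmem)
  · rintro q v w hvw ⟨⟨qv, ⟨wv, hspv, hev⟩, hqv⟩, qw, ⟨ww, hspw, hew⟩, hqw⟩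
    have heval : B.eval (wv.map Sum.inl ++ [Sum.inr ()])
        = B.eval (ww.map Sum.inl ++ [Sum.inr ()]) := by
      rw [estep, estep, hev, hew, ← hqv, ← hqw]
    have hmem : extWord (wv.map Sum.inl ++ [Sum.inr ()]) (fun _ => Sum.inl v)
        ∈ CharLang G v₀ :=
      natWord_mem hspv _ (fun k hk => extA _ _ _ hk) (extB _ _ _)
        (by rw [extC _ _ _ le_rfl])
    exact notChar_case2 hspw hvw.symm _ (fun k hk => extA _ _ _ hk) (extB _ _ _)
      (by rw [extC _ _ _ le_rfl]) (key _ _ _ heval hmem)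
end

section
/- Let G_{v₀} = (V, E) be a nice graph and let B be a deterministic Büchi automaton over V_♮ with L_B(B) = L(G_{v₀}). Then for every vertex v ∈ V there exists a v♮-state of B, and there exists a v-state of B that is not in the accepting set. -/
lemma runFrom_eq_evalFrom {α σ : Type*} (M : DFA α σ) (q : σ) (x : ℕ → α) :
    ∀ n, M.runFrom q x n = M.evalFrom q (List.ofFn fun i : Fin n => x i) := by
  intro n
  induction n with
  | zero => simp [DFA.runFrom, DFA.evalFrom]
  | succ n ih =>
    have h : (List.ofFn fun i : Fin (n + 1) => x i) =
        (List.ofFn fun i : Fin n => x i) ++ [x n] := by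
      rw [List.ofFn_succ']; simp [List.concat_eq_append]
    rw [h, DFA.evalFrom_append_singleton, ← ih]
    rfl

lemma IsStutterPath.append_replicate {V : Type} {G : SimpleGraph V} {v₀ u : V} {w : List V}
    (h : IsStutterPath G v₀ w u) (m : ℕ) :
    IsStutterPath G v₀ (w ++ List.replicate m u) u := by
  obtain ⟨n, v, i, h0, hadj, hi, hn, hw⟩ := h
  refine ⟨n, v, fun j => if j = n then i j + m else i j, h0, hadj, ?_, hn, ?_⟩
  · intro j h1 h2
    have := hi j h1 h2
    by_cases hj : j = n
    · subst hj
      calc 1 ≤ i j := this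
        _ ≤ i j + m := Nat.le_add_right _ _
        _ = if j = j then i j + m else i j := by rw [if_pos rfl]
    · simpa [hj] using this
  · have key : ∀ (ii : ℕ → ℕ),
        ((List.range (n + 1)).map (fun j => List.replicate (ii j) (v j))).flatten
          = ((List.range n).map (fun j => List.replicate (ii j) (v j))).flatten
              ++ List.replicate (ii n) (v n) := by
      intro ii; rw [List.range_succ]; simp
    rw [key] at hw
    rw [key]
    have hmap : (List.range n).map
          (fun j => List.replicate (if j = n then i j + m else i j) (v j))
        = (List.range n).map (fun j => List.replicate (i j) (v j)) := by
      apply List.map_congr_left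
      intro a ha
      have : a < n := List.mem_range.mp ha
      simp [Nat.ne_of_lt this]
    rw [hmap, if_pos rfl, List.replicate_add, hw, hn, List.append_assoc]

theorem exists_natState_and_rejecting_vState {V σ : Type} [Fintype V] [Fintype σ]
    (G : SimpleGraph V) (v₀ : V) (hconn : G.Connected) (hcard : 1 < Fintype.card V)
    (B : DFA (V ⊕ Unit) σ) (hL : BuchiLang B = CharLang G v₀) :
    ∀ v : V, (∃ q : σ, IsNatState G v₀ B v q) ∧
      (∃ q : σ, IsVState G v₀ B v q ∧ q ∉ B.accept) := by
  intro v
  classical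
  obtain ⟨p⟩ := hconn.preconnected v₀ v
  set w : List V :=
    ((List.range (p.length + 1)).map (fun j => List.replicate 1 (p.getVert j))).flatten with hwdef
  have hsp : IsStutterPath G v₀ w v :=
    ⟨p.length, p.getVert, fun _ => 1, p.getVert_zero,
      fun j hj => p.adj_getVert_succ hj, fun _ _ _ => le_refl 1, p.getVert_length, rfl⟩
  constructor
  · exact ⟨B.step (B.eval (w.map Sum.inl)) (Sum.inr ()),
      B.eval (w.map Sum.inl), ⟨w, hsp, rfl⟩, rfl⟩
  -- the word w · v^ω
  set α : ℕ → V ⊕ Unit :=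
    fun k => Sum.inl (if h : k < w.length then w.get ⟨k, h⟩ else v) with hαdef
  have hnotchar : α ∉ CharLang G v₀ := by
    rintro (⟨vv, f, hv0, hadj, hf0, hfstep, hub, hα⟩ | ⟨w', u, _, _, hnat, _⟩)
    · -- trace word: impossible
      have hfle : ∀ n, f n ≤ n + 1 := by
        intro n
        induction n with
        | zero => exact hf0
        | succ n ih => have := (hfstep n).2; omega
      have hhit : ∀ j, 1 ≤ j → ∃ n, f n = j := by
        intro j hj
        obtain ⟨n₀, hn₀⟩ := hub j
        have hex : ∃ n, j ≤ f n := ⟨n₀, hn₀⟩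
        have h1 : j ≤ f (Nat.find hex) := Nat.find_spec hex
        rcases Nat.eq_zero_or_pos (Nat.find hex) with h | h
        · refine ⟨Nat.find hex, ?_⟩
          rw [h] at h1 ⊢; omega
        · have h2 : ¬ j ≤ f (Nat.find hex - 1) := Nat.find_min hex (by omega)
          have h3 : f (Nat.find hex) ≤ f (Nat.find hex - 1) + 1 := by
            have := (hfstep (Nat.find hex - 1)).2
            rwa [Nat.sub_add_cancel h] at this
          exact ⟨Nat.find hex, by omega⟩
      have heq : ∀ j, 1 ≤ j → w.length + 1 ≤ j → vv j = v := by
        intro j hj1 hj2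
        obtain ⟨n, hn⟩ := hhit j hj1
        have hnle : w.length ≤ n := by have := hfle n; omega
        have := hα n
        rw [hn] at this
        simp only [hαdef, dif_neg (by omega : ¬ n < w.length)] at this
        exact (Sum.inl.injEq _ _).mp this.symm
      have h1 := heq (w.length + 1) (by omega) (by omega)
      have h2 := heq (w.length + 2) (by omega) (by omega)
      have := hadj (w.length + 1)
      rw [h1, show w.length + 1 + 1 = w.length + 2 from rfl, h2] at this
      exact G.irrefl this
    · -- natural word: impossible, α never produces ♮
      simp [hαdef] at hnat
  have hnotB : α ∉ BuchiLang B := by rw [hL]; exact hnotchar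
  have hfin : {n | B.runFrom B.start α n ∈ B.accept}.Finite :=
    Set.not_infinite.mp hnotB
  obtain ⟨N, hN⟩ := hfin.bddAbove
  set n : ℕ := max (N + 1) w.length with hndef
  have hnw : w.length ≤ n := le_max_right _ _
  have hrun : B.runFrom B.start α n ∉ B.accept := by
    intro hmem
    have : n ≤ N := hN hmem
    have : N + 1 ≤ n := le_max_left _ _
    omega
  have hofn : (List.ofFn fun i : Fin n => α i)
      = ((w ++ List.replicate (n - w.length) v).map Sum.inl) := by
    apply List.ext_getElem
    · simp; omega
    · intro k h1 h2
      simp only [List.getElem_ofFn, List.getElem_map]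
      by_cases hk : k < w.length
      · rw [List.getElem_append_left hk]
        simp [hαdef, hk]
      · rw [List.getElem_append_right (by omega)]
        simp [hαdef, hk]
  refine ⟨B.runFrom B.start α n, ⟨w ++ List.replicate (n - w.length) v,
    hsp.append_replicate _, ?_⟩, hrun⟩
  rw [runFrom_eq_evalFrom, hofn]
  rfl
end

section
/- Let G_{v₀} = (V, E) be a nice graph and let B be a deterministic Büchi automaton over V_♮ with L_B(B) = L(G_{v₀}). Then for every edge {v, w} ∈ E there exists a v-state of B in the accepting set or a w-state of B in the accepting set. -/
private lemma flatten_replicate_one {V : Type} (g : ℕ → V) (l : List ℕ) :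
    (l.map (fun j => List.replicate 1 (g j))).flatten = l.map g := by
  induction l with
  | nil => simp
  | cons a t ih => simpa using ih

private lemma runFrom_eq_evalFrom_s3 {A S : Type} (B : DFA A S) (q : S) (α : ℕ → A) :
    ∀ n, B.runFrom q α n = B.evalFrom q ((List.range n).map α)
  | 0 => by simp [DFA.runFrom]
  | n + 1 => by
    rw [DFA.runFrom, runFrom_eq_evalFrom_s3 B q α n, List.range_succ, List.map_append,
      List.map_singleton, DFA.evalFrom_append_singleton]

theorem exists_accepting_vState_of_edge {V σ : Type} [Fintype V] [Fintype σ]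
    (G : SimpleGraph V) (v₀ : V) (hconn : G.Connected) (hcard : 1 < Fintype.card V)
    (B : DFA (V ⊕ Unit) σ) (hL : BuchiLang B = CharLang G v₀) :
    ∀ v w : V, G.Adj v w →
      (∃ q : σ, IsVState G v₀ B v q ∧ q ∈ B.accept) ∨
      (∃ q : σ, IsVState G v₀ B w q ∧ q ∈ B.accept) := by
  classical
  intro v w hvw
  obtain ⟨p⟩ : G.Reachable v₀ v := hconn.preconnected v₀ v
  set m := p.length with hm
  -- the infinite vertex sequence: follow p, then alternate v, w forever
  set vs : ℕ → V := fun j =>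
    if j ≤ m then p.getVert j else (if (j - m) % 2 = 0 then v else w) with hvs
  have hvs0 : vs 0 = v₀ := by simp [hvs, SimpleGraph.Walk.getVert_zero]
  have hvsm : ∀ k, m ≤ k → vs k = v ∨ vs k = w := by
    intro k hk
    by_cases h : k ≤ m
    · left
      have hkm : k = m := le_antisymm h hk
      have : vs k = p.getVert k := by simp [hvs, h]
      rw [this, hkm]; exact p.getVert_length
    · by_cases h2 : (k - m) % 2 = 0
      · left; simp [hvs, h, h2]
      · right; simp [hvs, h, h2]
  have hadj : ∀ j, G.Adj (vs j) (vs (j + 1)) := by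
    intro j
    by_cases h1 : j + 1 ≤ m
    · have hj : j ≤ m := by omega
      have : G.Adj (p.getVert j) (p.getVert (j + 1)) :=
        p.adj_getVert_succ (by omega)
      simpa [hvs, hj, h1] using this
    · by_cases h2 : j ≤ m
      · have hjm : j = m := by omega
        have hs : (j + 1 - m) % 2 = 1 := by omega
        have : vs (j + 1) = w := by simp [hvs, h1, hs]
        rw [this]
        have e : vs j = p.getVert j := by simp [hvs, h2]
        rw [e, hjm]; rw [p.getVert_length]; exact hvw
      · have hmj : m < j := by omega
        by_cases h3 : (j - m) % 2 = 0
        · have hs : (j + 1 - m) % 2 = 1 := by omega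
          have e1 : vs j = v := by simp [hvs, h2, h3]
          have e2 : vs (j + 1) = w := by simp [hvs, h1, hs]
          rw [e1, e2]; exact hvw
        · have hs : (j + 1 - m) % 2 = 0 := by omega
          have e1 : vs j = w := by simp [hvs, h2, h3]
          have e2 : vs (j + 1) = v := by simp [hvs, h1, hs]
          rw [e1, e2]; exact hvw.symm
  -- the trace word
  set α : ℕ → V ⊕ Unit := fun n => Sum.inl (vs n) with hα
  have htrace : IsTraceWord G v₀ α :=
    ⟨vs, id, hvs0, hadj, by norm_num, fun n => ⟨Nat.le_succ n, le_refl _⟩,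
      fun k => ⟨k, le_refl _⟩, fun n => rfl⟩
  have hmem : α ∈ BuchiLang B := by
    rw [hL]; exact Or.inl htrace
  have hinf : {n | B.runFrom B.start α n ∈ B.accept}.Infinite := hmem
  obtain ⟨n, hn, hnm⟩ := hinf.exists_gt m
  have hn1 : 1 ≤ n := by omega
  -- the state reached after n steps
  have hstate : B.runFrom B.start α n ∈ B.accept := hn
  have heval : B.runFrom B.start α n = B.eval (((List.range n).map vs).map Sum.inl) := by
    rw [runFrom_eq_evalFrom_s3, List.map_map]
    rfl
  have hstutter : IsStutterPath G v₀ ((List.range n).map vs) (vs (n - 1)) := by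
    refine ⟨n - 1, vs, fun _ => 1, hvs0, fun j _ => hadj j,
      fun j _ _ => le_refl 1, rfl, ?_⟩
    rw [flatten_replicate_one]
    have : n - 1 + 1 = n := by omega
    rw [this]
  have hv : IsVState G v₀ B (vs (n - 1)) (B.runFrom B.start α n) :=
    ⟨(List.range n).map vs, hstutter, heval.symm⟩
  rcases hvsm (n - 1) (by omega) with h | h
  · left; exact ⟨_, h ▸ hv, hstate⟩
  · right; exact ⟨_, h ▸ hv, hstate⟩
end

section
/- Let G_{v₀} = (V, E) be a nice graph and let τ be the minimum cardinality of a vertex cover of G. Then every deterministic Büchi automaton B over V_♮ with L_B(B) = L(G_{v₀}) has a state type of cardinality at least 2·|V| + τ. -/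
namespace Aux

variable {A S : Type*} (M : DFA A S)

lemma runFrom_congr (q : S) {x y : ℕ → A} (n : ℕ) (h : ∀ k, k < n → x k = y k) :
    M.runFrom q x n = M.runFrom q y n := by
  induction n with
  | zero => rfl
  | succ n ih =>
    simp only [DFA.runFrom, ih (fun k hk => h k (hk.trans (Nat.lt_succ_self n))),
      h n (Nat.lt_succ_self n)]

lemma runFrom_ofFn (q : S) (x : ℕ → A) (n : ℕ) :
    M.runFrom q x n = M.evalFrom q (List.ofFn fun k : Fin n => x k) := by
  induction n with
  | zero => simp [DFA.runFrom, DFA.evalFrom]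
  | succ n ih =>
    rw [List.ofFn_succ']
    simp only [DFA.runFrom, ih, List.concat_eq_append, DFA.evalFrom_append_singleton,
      Fin.coe_castSucc, Fin.val_last]

/-- Prepend a finite word to an infinite word. -/
def pre (u : List A) (x : ℕ → A) : ℕ → A :=
  fun k => if h : k < u.length then u.get ⟨k, h⟩ else x (k - u.length)

lemma pre_lt (u : List A) (x : ℕ → A) {k : ℕ} (h : k < u.length) :
    pre u x k = u.get ⟨k, h⟩ := dif_pos h

lemma pre_ge (u : List A) (x : ℕ → A) {k : ℕ} (h : u.length ≤ k) :
    pre u x k = x (k - u.length) := dif_neg (by omega)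

lemma pre_add (u : List A) (x : ℕ → A) (n : ℕ) :
    pre u x (u.length + n) = x n := by
  rw [pre_ge u x (Nat.le_add_right _ _), Nat.add_sub_cancel_left]

lemma ofFn_pre (u : List A) (x : ℕ → A) :
    (List.ofFn fun k : Fin u.length => pre u x k) = u := by
  apply List.ext_get (by simp)
  intro k h1 h2
  simp only [List.get_ofFn, Fin.cast]
  exact pre_lt u x (by simpa using h1)

lemma runFrom_pre (q : S) (u : List A) (x : ℕ → A) (n : ℕ) :
    M.runFrom q (pre u x) (u.length + n) = M.runFrom (M.evalFrom q u) x n := by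
  induction n with
  | zero => rw [Nat.add_zero, runFrom_ofFn, ofFn_pre]; rfl
  | succ n ih =>
    rw [← Nat.add_assoc, DFA.runFrom, DFA.runFrom, ih, pre_add]

lemma buchi_pre (u : List A) (x : ℕ → A) :
    pre u x ∈ BuchiLang M ↔ {n | M.runFrom (M.eval u) x n ∈ M.accept}.Infinite := by
  constructor
  · intro h
    have h2 : ({n | M.runFrom M.start (pre u x) n ∈ M.accept} \ Set.Iio u.length).Infinite :=
      h.diff (Set.finite_Iio _)
    apply Set.Infinite.of_image (fun n => u.length + n)
    apply h2.mono
    rintro n ⟨hn, hn2⟩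
    simp only [Set.mem_Iio, not_lt] at hn2
    obtain ⟨m, rfl⟩ : ∃ m, n = u.length + m := ⟨n - u.length, by omega⟩
    refine ⟨m, ?_, rfl⟩
    show M.runFrom (M.eval u) x m ∈ M.accept
    rw [DFA.eval, ← runFrom_pre]
    exact hn
  · intro h
    have : Set.InjOn (fun n => u.length + n) {n | M.runFrom (M.eval u) x n ∈ M.accept} :=
      fun a _ b _ hab => by simpa using hab
    have h2 := h.image this
    apply h2.mono
    rintro n ⟨m, hm, rfl⟩
    show M.runFrom M.start (pre u x) (u.length + m) ∈ M.accept
    rw [runFrom_pre]; exact hm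


variable {V : Type} (G : SimpleGraph V) (v₀ : V)

/-- Inductive (snoc-style) presentation of stutter paths. -/
inductive SP : List V → V → Prop
  | nil : SP [] v₀
  | same {w u} : SP w u → SP (w ++ [u]) u
  | adj {w u u'} : SP w u → G.Adj u u' → SP (w ++ [u']) u'

variable {G v₀}

lemma get_concat_lt (l : List V) (a : V) {k : ℕ} (h : k < l.length)
    (h2 : k < (l ++ [a]).length) : (l ++ [a]).get ⟨k, h2⟩ = l.get ⟨k, h⟩ := by
  simp [List.getElem_append_left h]

lemma get_concat_last (l : List V) (a : V) (h2 : l.length < (l ++ [a]).length) :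
    (l ++ [a]).get ⟨l.length, h2⟩ = a := by simp

def blocksW (v : ℕ → V) (i : ℕ → ℕ) (n : ℕ) : List V :=
  ((List.range (n + 1)).map (fun j => List.replicate (i j) (v j))).flatten

lemma blocksW_zero (v : ℕ → V) (i : ℕ → ℕ) : blocksW v i 0 = List.replicate (i 0) (v 0) := by
  simp [blocksW, List.range_succ]

lemma blocksW_succ (v : ℕ → V) (i : ℕ → ℕ) (n : ℕ) :
    blocksW v i (n + 1) = blocksW v i n ++ List.replicate (i (n + 1)) (v (n + 1)) := by
  simp [blocksW, List.range_succ]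

lemma blocksW_congr {v v' : ℕ → V} {i i' : ℕ → ℕ} (n : ℕ)
    (h : ∀ j, j ≤ n → v j = v' j ∧ i j = i' j) : blocksW v i n = blocksW v' i' n := by
  unfold blocksW
  congr 1
  apply List.map_congr_left
  intro j hj
  rw [List.mem_range] at hj
  obtain ⟨h1, h2⟩ := h j (by omega)
  rw [h1, h2]

lemma blocksW_update (v : ℕ → V) (i : ℕ → ℕ) (n k : ℕ) :
    blocksW v (Function.update i n (k + 1)) n = blocksW v (Function.update i n k) n ++ [v n] := by
  cases n with
  | zero =>
    rw [blocksW_zero, blocksW_zero]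
    simp [List.replicate_succ']
  | succ m =>
    rw [blocksW_succ, blocksW_succ, Function.update_self, Function.update_self]
    have e : ∀ c : ℕ, blocksW v (Function.update i (m + 1) c) m = blocksW v i m := fun c =>
      blocksW_congr m (fun j hj => ⟨rfl, Function.update_of_ne (by omega) c i⟩)
    rw [e, e, List.replicate_succ', List.append_assoc]

lemma isStutterPath_def (w : List V) (u : V) : IsStutterPath G v₀ w u ↔
    ∃ (n : ℕ) (v : ℕ → V) (i : ℕ → ℕ),
      v 0 = v₀ ∧ (∀ j, j < n → G.Adj (v j) (v (j + 1))) ∧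
      (∀ j, 1 ≤ j → j ≤ n → 1 ≤ i j) ∧ v n = u ∧ w = blocksW v i n := Iff.rfl

lemma sp_replicate (m : ℕ) : SP G v₀ (List.replicate m v₀) v₀ := by
  induction m with
  | zero => exact SP.nil
  | succ m ih => rw [List.replicate_succ']; exact ih.same

lemma sp_of_isStutterPath_aux : ∀ (L : ℕ) (w : List V) (u : V), w.length ≤ L →
    IsStutterPath G v₀ w u → SP G v₀ w u := by
  intro L
  induction L with
  | zero =>
    intro w u hw h
    rw [isStutterPath_def] at h
    obtain ⟨n, v, i, h0, hadj, hi, rfl, rfl⟩ := h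
    have hwnil : blocksW v i n = [] := List.length_eq_zero_iff.mp (by omega)
    have hn : n = 0 := by
      by_contra hn0
      have h1 : List.replicate (i n) (v n) = [] := by
        unfold blocksW at hwnil
        rw [List.flatten_eq_nil_iff] at hwnil
        exact hwnil _ (List.mem_map_of_mem (List.mem_range.mpr (Nat.lt_succ_self n)))
      have h2 : 1 ≤ i n := hi n (by omega) le_rfl
      simp only [List.replicate_eq_nil_iff] at h1
      omega
    rw [hwnil, hn, h0]
    exact SP.nil
  | succ L ih =>
    intro w u hw h
    rw [isStutterPath_def] at h
    obtain ⟨n, v, i, h0, hadj, hi, rfl, rfl⟩ := h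
    cases n with
    | zero =>
      rw [blocksW_zero, h0]
      exact sp_replicate _
    | succ m =>
      have hin : 1 ≤ i (m + 1) := hi _ (by omega) le_rfl
      rcases Nat.exists_eq_add_of_le hin with ⟨k, hk⟩
      cases k with
      | zero =>
        have hweq : blocksW v i (m + 1) = blocksW v i m ++ [v (m + 1)] := by
          rw [blocksW_succ, hk]
          simp
        have hlen : (blocksW v i m).length ≤ L := by
          have := congrArg List.length hweq
          simp only [List.length_append, List.length_singleton] at this
          omega
        have hpre : SP G v₀ (blocksW v i m) (v m) :=
          ih _ _ hlen ((isStutterPath_def _ _).mpr ⟨m, v, i, h0, fun j hj => hadj j (by omega),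
            fun j h1 h2 => hi j h1 (by omega), rfl, rfl⟩)
        rw [hweq]
        exact hpre.adj (hadj m (by omega))
      | succ k =>
        set i' := Function.update i (m + 1) (k + 1) with hi'
        have hieq : i = Function.update i' (m + 1) (k + 1 + 1) := by
          funext j
          by_cases hj : j = m + 1
          · subst hj; rw [Function.update_self]; omega
          · rw [Function.update_of_ne hj, hi', Function.update_of_ne hj]
        have hweq : blocksW v i (m + 1) = blocksW v i' (m + 1) ++ [v (m + 1)] := by
          conv_lhs => rw [hieq]
          rw [blocksW_update]
          congr 2
          funext j
          by_cases hj : j = m + 1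
          · subst hj; rw [Function.update_self, hi', Function.update_self]
          · rw [Function.update_of_ne hj, hi', Function.update_of_ne hj]
        have hlen : (blocksW v i' (m + 1)).length ≤ L := by
          have := congrArg List.length hweq
          simp only [List.length_append, List.length_singleton] at this
          omega
        have hpre : SP G v₀ (blocksW v i' (m + 1)) (v (m + 1)) :=
          ih _ _ hlen ((isStutterPath_def _ _).mpr ⟨m + 1, v, i', h0, hadj, fun j h1 h2 => by
            by_cases hj : j = m + 1
            · subst hj; rw [hi', Function.update_self]; omega
            · rw [hi', Function.update_of_ne hj]; exact hi j h1 h2, rfl, rfl⟩)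
        rw [hweq]
        exact hpre.same

lemma sp_of_isStutterPath {w : List V} {u : V} (h : IsStutterPath G v₀ w u) : SP G v₀ w u :=
  sp_of_isStutterPath_aux w.length w u le_rfl h

lemma isStutterPath_of_sp {w : List V} {u : V} (h : SP G v₀ w u) : IsStutterPath G v₀ w u := by
  induction h with
  | nil =>
    exact (isStutterPath_def _ _).mpr ⟨0, fun _ => v₀, fun _ => 0, rfl, fun j hj => by omega,
      fun j h1 h2 => by omega, rfl, by rw [blocksW_zero]; rfl⟩
  | @same w u hsp ih =>
    rw [isStutterPath_def] at ih ⊢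
    obtain ⟨n, v, i, h0, hadj, hi, hu, hweq⟩ := ih
    refine ⟨n, v, Function.update i n (i n + 1), h0, hadj, fun j h1 h2 => ?_, hu, ?_⟩
    · by_cases hj : j = n
      · subst hj; rw [Function.update_self]; omega
      · rw [Function.update_of_ne hj]; exact hi j h1 h2
    · rw [blocksW_update, hu, hweq]
      congr 2
      rw [Function.update_eq_self]
  | @adj w u u' hsp hadjuu' ih =>
    rw [isStutterPath_def] at ih ⊢
    obtain ⟨n, v, i, h0, hadj, hi, hu, hweq⟩ := ih
    refine ⟨n + 1, fun j => if j ≤ n then v j else u', fun j => if j ≤ n then i j else 1,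
      by simp [h0], fun j hj => ?_, fun j h1 h2 => ?_, by simp, ?_⟩
    · by_cases hjn : j < n
      · simp only [if_pos (by omega : j ≤ n), if_pos (by omega : j + 1 ≤ n)]
        exact hadj j hjn
      · have : j = n := by omega
        subst this
        simp only [if_pos le_rfl, if_neg (by omega : ¬ j + 1 ≤ j), hu]
        exact hadjuu'
    · by_cases hj : j ≤ n
      · simp only [if_pos hj]; exact hi j h1 (by omega)
      · simp only [if_neg hj]
        exact le_rfl
    · rw [blocksW_succ]
      rw [show blocksW (fun j => if j ≤ n then v j else u') (fun j => if j ≤ n then i j else 1) n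
          = blocksW v i n from
        (blocksW_congr n (fun j hj => ⟨(if_pos hj).symm ▸ rfl, (if_pos hj).symm ▸ rfl⟩)).symm,
        ← hweq]
      simp

lemma sp_iff (w : List V) (u : V) : IsStutterPath G v₀ w u ↔ SP G v₀ w u :=
  ⟨sp_of_isStutterPath, isStutterPath_of_sp⟩

lemma sp_getLastD {w : List V} {u : V} (h : SP G v₀ w u) : w.getLastD v₀ = u := by
  induction h with
  | nil => rfl
  | same _ _ => exact List.getLastD_concat
  | adj _ _ _ => exact List.getLastD_concat

lemma sp_endpoint_unique {w : List V} {a b : V} (h1 : SP G v₀ w a) (h2 : SP G v₀ w b) : a = b :=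
  (sp_getLastD h1).symm.trans (sp_getLastD h2)

lemma sp_exists (hconn : G.Connected) (v : V) : ∃ w, SP G v₀ w v := by
  have key : ∀ {a b : V} (_ : G.Walk a b) (w : List V), SP G v₀ w a → ∃ w', SP G v₀ w' b := by
    intro a b p
    induction p with
    | nil => exact fun w h => ⟨w, h⟩
    | cons hadj p ih => exact fun w h => ih _ (h.adj hadj)
  obtain ⟨p⟩ := hconn.preconnected v₀ v
  exact key p [] SP.nil

/-- The auxiliary "package" extracted from a stutter path, used to build trace words. -/
lemma sp_package {w : List V} {u : V} (h : SP G v₀ w u) :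
    ∃ (v : ℕ → V) (m : ℕ) (g : ℕ → ℕ),
      v 0 = v₀ ∧ (∀ j, j < m → G.Adj (v j) (v (j + 1))) ∧ v m = u ∧
      (w = [] → m = 0) ∧
      (∀ k, k < w.length → g k ≤ m) ∧
      (0 < w.length → g 0 ≤ 1) ∧
      (0 < w.length → g (w.length - 1) = m) ∧
      (∀ k, k + 1 < w.length → g k ≤ g (k + 1) ∧ g (k + 1) ≤ g k + 1) ∧
      (∀ k (hk : k < w.length), w.get ⟨k, hk⟩ = v (g k)) := by
  induction h with
  | nil =>
    exact ⟨fun _ => v₀, 0, fun _ => 0, rfl, fun j hj => by omega, rfl, fun _ => rfl,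
      fun k hk => by simp at hk, fun h => by simp at h, fun h => by simp at h,
      fun k hk => by simp at hk, fun k hk => by simp at hk⟩
  | @same w u hsp ih =>
    obtain ⟨v, m, g, h0, hadj, hm, hnil, hle, hg0, hlast, hstep, hget⟩ := ih
    refine ⟨v, m, fun k => if k < w.length then g k else m, h0, hadj, hm,
      fun hc => by simp at hc, ?_, ?_, ?_, ?_, ?_⟩
    · intro k hk
      beta_reduce
      by_cases h : k < w.length
      · rw [if_pos h]; exact hle k h
      · rw [if_neg h]
    · intro _
      beta_reduce
      by_cases h : 0 < w.length
      · rw [if_pos h]; exact hg0 h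
      · rw [if_neg (by omega)]
        have := hnil (List.length_eq_zero_iff.mp (by omega))
        omega
    · intro _
      beta_reduce
      simp only [List.length_append, List.length_singleton, Nat.add_sub_cancel]
      rw [if_neg (lt_irrefl w.length)]
    · intro k hk
      beta_reduce
      simp only [List.length_append, List.length_singleton] at hk
      by_cases h : k + 1 < w.length
      · rw [if_pos (by omega), if_pos h]
        exact hstep k h
      · have hkeq : k + 1 = w.length := by omega
        rw [if_pos (by omega), if_neg (by omega)]
        have h1 := hlast (by omega)
        have h2 : g k = m := by rw [← h1]; congr 1; omega
        omega
    · intro k hk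
      beta_reduce
      simp only [List.length_append, List.length_singleton] at hk
      by_cases h : k < w.length
      · rw [get_concat_lt _ _ h, if_pos h]
        exact hget k h
      · have hkeq : k = w.length := by omega
        subst hkeq
        rw [get_concat_last, if_neg (lt_irrefl _), hm]
  | @adj w u u' hsp hadjuu' ih =>
    obtain ⟨v, m, g, h0, hadj, hm, hnil, hle, hg0, hlast, hstep, hget⟩ := ih
    refine ⟨fun j => if j ≤ m then v j else u', m + 1,
      fun k => if k < w.length then g k else m + 1, by simp [h0], ?_,
      by simp [if_neg (by omega : ¬ m + 1 ≤ m)], fun hc => by simp at hc, ?_, ?_, ?_, ?_, ?_⟩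
    · intro j hj
      by_cases hjm : j < m
      · simp only [if_pos (by omega : j ≤ m), if_pos (by omega : j + 1 ≤ m)]
        exact hadj j hjm
      · have : j = m := by omega
        subst this
        simp only [if_pos le_rfl, if_neg (by omega : ¬ j + 1 ≤ j), hm]
        exact hadjuu'
    · intro k hk
      beta_reduce
      by_cases h : k < w.length
      · rw [if_pos h]; exact (hle k h).trans (by omega)
      · rw [if_neg h]
    · intro _
      beta_reduce
      by_cases h : 0 < w.length
      · rw [if_pos h]; exact hg0 h
      · rw [if_neg (by omega)]
        have := hnil (List.length_eq_zero_iff.mp (by omega))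
        omega
    · intro _
      beta_reduce
      simp only [List.length_append, List.length_singleton, Nat.add_sub_cancel]
      rw [if_neg (lt_irrefl w.length)]
    · intro k hk
      beta_reduce
      simp only [List.length_append, List.length_singleton] at hk
      by_cases h : k + 1 < w.length
      · rw [if_pos (by omega), if_pos h]
        exact hstep k h
      · have hkeq : k + 1 = w.length := by omega
        rw [if_pos (by omega), if_neg (by omega)]
        have h1 := hlast (by omega)
        have h2 : g k = m := by rw [← h1]; congr 1; omega
        omega
    · intro k hk
      beta_reduce
      simp only [List.length_append, List.length_singleton] at hk
      by_cases h : k < w.length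
      · rw [get_concat_lt _ _ h, if_pos h, if_pos (hle k h)]
        exact hget k h
      · have hkeq : k = w.length := by omega
        subst hkeq
        rw [get_concat_last, if_neg (lt_irrefl _), if_neg (by omega : ¬ m + 1 ≤ m)]


variable {V : Type} {G : SimpleGraph V} {v₀ : V}

lemma nat_ivt {f : ℕ → ℕ} (hstep : ∀ n, f (n + 1) ≤ f n + 1) {a b m : ℕ}
    (ha : f a ≤ m) (hb : m ≤ f b) (hab : a ≤ b) : ∃ c, a ≤ c ∧ f c = m := by
  classical
  have hex : ∃ c, a ≤ c ∧ m ≤ f c := ⟨b, hab, hb⟩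
  obtain ⟨hc1, hc2⟩ := Nat.find_spec hex
  rcases Nat.eq_or_lt_of_le hc1 with heq | hlt
  · refine ⟨Nat.find hex, hc1, le_antisymm ?_ hc2⟩
    rw [← heq]
    exact ha
  · obtain ⟨d, hd⟩ : ∃ d, Nat.find hex = d + 1 := ⟨Nat.find hex - 1, by omega⟩
    have hmin : ¬ (a ≤ d ∧ m ≤ f d) := Nat.find_min hex (by omega)
    have hfd : f d < m := by
      by_contra h
      exact hmin ⟨by omega, by omega⟩
    have hs := hstep d
    rw [hd] at hc2
    refine ⟨Nat.find hex, hc1, ?_⟩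
    rw [hd]
    omega

lemma natWord_inversion {α : ℕ → V ⊕ Unit} (w : List V)
    (hpre : ∀ k (hk : k < w.length), α k = Sum.inl (w.get ⟨k, hk⟩))
    (hnat : α w.length = Sum.inr ()) (h : IsNaturalWord G v₀ α) :
    ∃ u, SP G v₀ w u ∧ α (w.length + 1) = Sum.inl u := by
  obtain ⟨w', u', hsp, hpre', hnat', hend⟩ := h
  have hlen : w'.length = w.length := by
    rcases lt_trichotomy w'.length w.length with h1 | h1 | h1
    · have := hpre w'.length h1
      rw [hnat'] at this
      exact absurd this (by simp)
    · exact h1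
    · have := hpre' ⟨w.length, h1⟩
      rw [hnat] at this
      exact absurd this.symm (by simp)
  have hw : w' = w := by
    apply List.ext_get hlen
    intro k h1 h2
    have e1 := hpre' ⟨k, h1⟩
    have e2 := hpre k h2
    rw [e2] at e1
    exact (Sum.inl_injective e1.symm)
  subst hw
  exact ⟨u', sp_of_isStutterPath hsp, by rw [← hlen]; exact hend⟩

lemma not_charLang_of_nat_mismatch {α : ℕ → V ⊕ Unit} {w : List V} {v : V}
    (hsp : SP G v₀ w v)
    (hpre : ∀ k (hk : k < w.length), α k = Sum.inl (w.get ⟨k, hk⟩))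
    (hnat : α w.length = Sum.inr ()) (hmis : α (w.length + 1) ≠ Sum.inl v) :
    α ∉ CharLang G v₀ := by
  rintro (⟨v', f, _, _, _, _, _, hall⟩ | h)
  · have := hall w.length
    rw [hnat] at this
    exact absurd this (by simp)
  · obtain ⟨u, hspu, hend⟩ := natWord_inversion w hpre hnat h
    exact hmis (by rw [hend, sp_endpoint_unique hspu hsp])

lemma charLang_of_nat {α : ℕ → V ⊕ Unit} {w : List V} {v : V} (hsp : SP G v₀ w v)
    (hpre : ∀ k (hk : k < w.length), α k = Sum.inl (w.get ⟨k, hk⟩))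
    (hnat : α w.length = Sum.inr ()) (hend : α (w.length + 1) = Sum.inl v) :
    α ∈ CharLang G v₀ :=
  Or.inr ⟨w, v, isStutterPath_of_sp hsp, fun k => hpre k k.2, hnat, hend⟩

lemma not_traceWord_eventually_const {α : ℕ → V ⊕ Unit} (N : ℕ) (v : V)
    (hconst : ∀ k, N ≤ k → α k = Sum.inl v) : ¬ IsTraceWord G v₀ α := by
  rintro ⟨vs, f, h0, hadj, hf0, hstep, hunb, hall⟩
  have hmono : Monotone f := monotone_nat_of_le_succ (fun n => (hstep n).1)
  have hval : ∀ k, N ≤ k → vs (f k) = v := by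
    intro k hk
    have e1 := hall k
    rw [hconst k hk] at e1
    exact (Sum.inl_injective e1.symm)
  obtain ⟨n1, hn1⟩ := hunb (f N + 1)
  have hfb : f N + 1 ≤ f (max n1 N) := le_trans hn1 (hmono (le_max_left _ _))
  obtain ⟨c, hc1, hc2⟩ := nat_ivt (fun n => (hstep n).2)
    (show f N ≤ f N + 1 by omega) hfb (le_max_right _ _)
  have e1 : vs (f N) = v := hval N le_rfl
  have e2 : vs (f N + 1) = v := by rw [← hc2]; exact hval c hc1
  have := hadj (f N)
  rw [e1, e2] at this
  exact G.loopless.irrefl v this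

lemma not_natWord_no_flat {α : ℕ → V ⊕ Unit} (h : ∀ k, α k ≠ Sum.inr ()) :
    ¬ IsNaturalWord G v₀ α := by
  rintro ⟨w, u, _, _, hnat, _⟩
  exact h _ hnat


variable {V : Type} {G : SimpleGraph V} {v₀ : V}

/-- The letters (in `V`) of the word `u · (b a b a ⋯)^ω`. -/
def altSeq (u : List V) (a b : V) : ℕ → V :=
  fun k => if h : k < u.length then u.get ⟨k, h⟩ else if Even (k - u.length) then b else a

lemma altSeq_lt (u : List V) (a b : V) {k : ℕ} (h : k < u.length) :
    altSeq u a b k = u.get ⟨k, h⟩ := dif_pos h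

lemma altSeq_ge (u : List V) (a b : V) {k : ℕ} (h : u.length ≤ k) :
    altSeq u a b k = if Even (k - u.length) then b else a := dif_neg (by omega)

/-- The letters (in `V`) of the word `u · v^ω`. -/
def repSeq (u : List V) (v : V) : ℕ → V :=
  fun k => if h : k < u.length then u.get ⟨k, h⟩ else v

lemma repSeq_lt (u : List V) (v : V) {k : ℕ} (h : k < u.length) :
    repSeq u v k = u.get ⟨k, h⟩ := dif_pos h

lemma repSeq_ge (u : List V) (v : V) {k : ℕ} (h : u.length ≤ k) :
    repSeq u v k = v := dif_neg (by omega)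

lemma ofFn_base (β : ℕ → V) (u : List V) (h : ∀ k (hk : k < u.length), β k = u.get ⟨k, hk⟩) :
    (List.ofFn fun k : Fin (u.length + 0) => β k) = u := by
  apply List.ext_get (by simp)
  intro k h1 h2
  simp only [List.get_ofFn, Fin.coe_cast]
  exact h k h2

lemma ofFn_snoc (β : ℕ → V) (n : ℕ) :
    (List.ofFn fun k : Fin (n + 1) => β k) = (List.ofFn fun k : Fin n => β k) ++ [β n] := by
  rw [List.ofFn_succ']
  simp

lemma altSeq_prefix_sp {u : List V} {a b : V} (hsp : SP G v₀ u a) (hadj : G.Adj a b) (t : ℕ) :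
    SP G v₀ (List.ofFn fun k : Fin (u.length + t) => altSeq u a b k)
      (if Even t then a else b) := by
  induction t with
  | zero =>
    rw [ofFn_base _ u (fun k hk => altSeq_lt u a b hk), if_pos (by simp)]
    exact hsp
  | succ t ih =>
    rw [← Nat.add_assoc, ofFn_snoc]
    have hlet : altSeq u a b (u.length + t) = if Even t then b else a := by
      rw [altSeq_ge u a b (by omega), Nat.add_sub_cancel_left]
    rw [hlet]
    rcases Nat.even_or_odd t with he | ho
    · rw [if_pos he, if_neg (by simp [Nat.even_add_one, he])]
      rw [if_pos he] at ih
      exact ih.adj hadj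
    · rw [if_neg (by simp [Nat.not_even_iff_odd.mpr ho]), if_pos (by
        simp [Nat.even_add_one, Nat.not_even_iff_odd.mpr ho])]
      rw [if_neg (by simp [Nat.not_even_iff_odd.mpr ho])] at ih
      exact ih.adj hadj.symm

lemma repSeq_prefix_sp {u : List V} {v : V} (hsp : SP G v₀ u v) (t : ℕ) :
    SP G v₀ (List.ofFn fun k : Fin (u.length + t) => repSeq u v k) v := by
  induction t with
  | zero =>
    rw [ofFn_base _ u (fun k hk => repSeq_lt u v hk)]
    exact hsp
  | succ t ih =>
    rw [← Nat.add_assoc, ofFn_snoc, repSeq_ge u v (by omega)]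
    exact ih.same

/-- The infinite word `u · (b a)^ω` is a trace word when `u` is a stutter path to `a`
and `a b` is an edge. -/
lemma altSeq_traceWord {u : List V} {a b : V} (hsp : SP G v₀ u a) (hadj : G.Adj a b) :
    IsTraceWord G v₀ (fun k => Sum.inl (altSeq u a b k)) := by
  obtain ⟨v, m, g, h0, hadjv, hm, hnil, hle, hg0, hlast, hstep, hget⟩ := sp_package hsp
  refine ⟨fun j => if j ≤ m then v j else if Even (j - m) then a else b,
    fun k => if k < u.length then g k else m + 1 + (k - u.length),
    by beta_reduce; rw [if_pos (Nat.zero_le m), h0], ?_, ?_, ?_, ?_, ?_⟩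
  · intro j
    beta_reduce
    split_ifs with h1 h2 h3 h4 h5 h6 <;>
      simp -failIfUnchanged only [Nat.even_iff] at * <;>
      first
        | (exact hadjv j (by omega))
        | (rw [show j = m by omega, hm]; exact hadj)
        | exact hadj
        | exact hadj.symm
        | (exfalso; omega)
  · beta_reduce
    by_cases h : 0 < u.length
    · rw [if_pos h]; exact hg0 h
    · rw [if_neg (by omega)]
      have := hnil (List.length_eq_zero_iff.mp (by omega))
      omega
  · intro n
    beta_reduce
    by_cases h1 : n + 1 < u.length
    · rw [if_pos (by omega), if_pos h1]
      exact hstep n h1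
    · by_cases h2 : n < u.length
      · have hn1 : n + 1 = u.length := by omega
        rw [if_pos h2, if_neg (by omega)]
        have e1 := hlast (by omega)
        have e2 : g n = m := by rw [← e1]; congr 1; omega
        constructor
        · omega
        · rw [e2]; omega
      · rw [if_neg h2, if_neg (by omega)]
        omega
  · intro m0
    refine ⟨u.length + m0, ?_⟩
    beta_reduce
    rw [if_neg (by omega)]
    omega
  · intro n
    beta_reduce
    by_cases h : n < u.length
    · rw [if_pos h, altSeq_lt u a b h, hget n h, if_pos (hle n h)]
    · rw [if_neg h, altSeq_ge u a b (by omega)]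
      have hv : (if m + 1 + (n - u.length) ≤ m then v (m + 1 + (n - u.length))
          else if Even (m + 1 + (n - u.length) - m) then a else b)
          = if Even (n - u.length) then b else a := by
        rw [if_neg (by omega)]
        have e1 : m + 1 + (n - u.length) - m = n - u.length + 1 := by omega
        rw [e1]
        rcases Nat.even_or_odd (n - u.length) with he | ho
        · rw [if_neg (by simp [Nat.even_add_one, he]), if_pos he]
        · have hne : ¬ Even (n - u.length) := Nat.not_even_iff_odd.mpr ho
          rw [if_pos (by simp [Nat.even_add_one, hne]), if_neg hne]
      rw [hv]


variable {V S : Type} {G : SimpleGraph V} {v₀ : V} {B : DFA (V ⊕ Unit) S}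

/-- The continuation `♮ v v v ⋯`. -/
def natCont (v : V) : ℕ → V ⊕ Unit :=
  fun k => if k = 0 then Sum.inr () else Sum.inl v

lemma pre_map_inl_prefix (w : List V) (x : ℕ → V ⊕ Unit) :
    ∀ k (hk : k < w.length), pre (w.map Sum.inl) x k = Sum.inl (w.get ⟨k, hk⟩) := by
  intro k hk
  rw [pre_lt _ _ (by simpa using hk)]
  simp

lemma pre_map_inl_after (w : List V) (x : ℕ → V ⊕ Unit) (j : ℕ) :
    pre (w.map Sum.inl) x (w.length + j) = x j := by
  rw [pre_ge _ _ (by simp)]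
  simp

lemma vstate_accept_nat (hL : BuchiLang B = CharLang G v₀) {v : V} {q : S}
    (hq : IsVState G v₀ B v q) :
    {n | B.runFrom q (natCont v) n ∈ B.accept}.Infinite := by
  obtain ⟨w, hsp', heval⟩ := hq
  have hsp := sp_of_isStutterPath hsp'
  have hmem : pre (w.map Sum.inl) (natCont v) ∈ CharLang G v₀ := by
    apply charLang_of_nat hsp (pre_map_inl_prefix w _)
    · rw [show w.length = w.length + 0 by omega, pre_map_inl_after]
      rfl
    · rw [pre_map_inl_after]
      rfl
  rw [← hL] at hmem
  have h2 := (buchi_pre B (w.map Sum.inl) (natCont v)).mp hmem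
  rwa [show B.eval (w.map Sum.inl) = q from heval] at h2

lemma vstate_nomatch (hL : BuchiLang B = CharLang G v₀) {v : V} {q : S}
    (hq : IsVState G v₀ B v q) (x : ℕ → V ⊕ Unit)
    (hx0 : x 0 = Sum.inr ()) (hx1 : x 1 ≠ Sum.inl v) :
    ¬ {n | B.runFrom q x n ∈ B.accept}.Infinite := by
  obtain ⟨w, hsp', heval⟩ := hq
  have hsp := sp_of_isStutterPath hsp'
  intro hinf
  have hmem : pre (w.map Sum.inl) x ∈ BuchiLang B := by
    rw [buchi_pre, show B.eval (w.map Sum.inl) = q from heval]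
    exact hinf
  rw [hL] at hmem
  refine not_charLang_of_nat_mismatch hsp (pre_map_inl_prefix w x) ?_ ?_ hmem
  · rw [show w.length = w.length + 0 by omega, pre_map_inl_after]
    exact hx0
  · rw [pre_map_inl_after]
    exact hx1

lemma natstate_accept (hL : BuchiLang B = CharLang G v₀) {v : V} {p : S}
    (hp : IsNatState G v₀ B v p) (x : ℕ → V ⊕ Unit) (hx0 : x 0 = Sum.inl v) :
    {n | B.runFrom p x n ∈ B.accept}.Infinite := by
  obtain ⟨q, ⟨w, hsp', heval⟩, rfl⟩ := hp
  have hsp := sp_of_isStutterPath hsp'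
  set u : List (V ⊕ Unit) := w.map Sum.inl ++ [Sum.inr ()] with hu
  have hlen : u.length = w.length + 1 := by simp [hu]
  have hpre : ∀ k (hk : k < w.length), pre u x k = Sum.inl (w.get ⟨k, hk⟩) := by
    intro k hk
    rw [pre_lt _ _ (by omega)]
    simp only [hu, List.get_eq_getElem]
    rw [List.getElem_append_left (by simpa using hk)]
    simp
  have hnat : pre u x w.length = Sum.inr () := by
    rw [pre_lt _ _ (by omega)]
    simp only [hu, List.get_eq_getElem]
    rw [List.getElem_append_right (by simp)]
    simp
  have hend : pre u x (w.length + 1) = x 0 := by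
    rw [pre_ge _ _ (by omega)]
    congr 1
    omega
  have hmem : pre u x ∈ CharLang G v₀ :=
    charLang_of_nat hsp hpre hnat (by rw [hend, hx0])
  rw [← hL] at hmem
  have h2 := (buchi_pre B u x).mp hmem
  rwa [show B.eval u = B.step q (Sum.inr ()) by
    rw [hu, DFA.eval, DFA.evalFrom_append_singleton,
      show B.evalFrom B.start (w.map Sum.inl) = q from heval]] at h2

lemma natstate_reject (hL : BuchiLang B = CharLang G v₀) {v : V} {p : S}
    (hp : IsNatState G v₀ B v p) (x : ℕ → V ⊕ Unit) (hx0 : x 0 ≠ Sum.inl v) :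
    ¬ {n | B.runFrom p x n ∈ B.accept}.Infinite := by
  obtain ⟨q, ⟨w, hsp', heval⟩, rfl⟩ := hp
  have hsp := sp_of_isStutterPath hsp'
  set u : List (V ⊕ Unit) := w.map Sum.inl ++ [Sum.inr ()] with hu
  have hlen : u.length = w.length + 1 := by simp [hu]
  have hpre : ∀ k (hk : k < w.length), pre u x k = Sum.inl (w.get ⟨k, hk⟩) := by
    intro k hk
    rw [pre_lt _ _ (by omega)]
    simp only [hu, List.get_eq_getElem]
    rw [List.getElem_append_left (by simpa using hk)]
    simp
  have hnat : pre u x w.length = Sum.inr () := by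
    rw [pre_lt _ _ (by omega)]
    simp only [hu, List.get_eq_getElem]
    rw [List.getElem_append_right (by simp)]
    simp
  have hend : pre u x (w.length + 1) = x 0 := by
    rw [pre_ge _ _ (by omega)]
    congr 1
    omega
  intro hinf
  have hmem : pre u x ∈ BuchiLang B := by
    rw [buchi_pre, show B.eval u = B.step q (Sum.inr ()) by
      rw [hu, DFA.eval, DFA.evalFrom_append_singleton,
        show B.evalFrom B.start (w.map Sum.inl) = q from heval]]
    exact hinf
  rw [hL] at hmem
  exact not_charLang_of_nat_mismatch hsp hpre hnat (by rw [hend]; exact hx0) hmem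

lemma vstate_unique (hL : BuchiLang B = CharLang G v₀) {v w : V} {q : S}
    (h1 : IsVState G v₀ B v q) (h2 : IsVState G v₀ B w q) : v = w := by
  by_contra hne
  exact vstate_nomatch hL h2 (natCont v) rfl
    (by simp only [natCont, if_neg one_ne_zero]; exact fun h => hne (Sum.inl_injective h))
    (vstate_accept_nat hL h1)

lemma natstate_unique (hL : BuchiLang B = CharLang G v₀) {v w : V} {p : S}
    (h1 : IsNatState G v₀ B v p) (h2 : IsNatState G v₀ B w p) : v = w := by
  by_contra hne
  exact natstate_reject hL h2 (fun _ => Sum.inl v)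
    (fun h => hne (Sum.inl_injective h)) (natstate_accept hL h1 _ rfl)

lemma vstate_not_natstate (hL : BuchiLang B = CharLang G v₀) {v w : V} {q : S}
    (h1 : IsVState G v₀ B v q) (h2 : IsNatState G v₀ B w q) : False :=
  natstate_reject hL h2 (natCont v) (by simp [natCont]) (vstate_accept_nat hL h1)

lemma exists_nonacc_vstate (hL : BuchiLang B = CharLang G v₀) (v : V)
    (hex : ∃ w, SP G v₀ w v) : ∃ q, IsVState G v₀ B v q ∧ q ∉ B.accept := by
  obtain ⟨w, hsp⟩ := hex
  set x : ℕ → V ⊕ Unit := fun k => Sum.inl (repSeq w v k) with hx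
  have hnot : x ∉ CharLang G v₀ := by
    rintro (ht | hn)
    · refine not_traceWord_eventually_const w.length v ?_ ht
      intro k hk
      rw [hx]
      beta_reduce
      rw [repSeq_ge w v hk]
    · exact not_natWord_no_flat (fun k => by rw [hx]; simp) hn
  rw [← hL] at hnot
  have hfin : {n | B.runFrom B.start x n ∈ B.accept}.Finite := Set.not_infinite.mp hnot
  obtain ⟨N, hN⟩ := hfin.bddAbove
  have hn0 : B.runFrom B.start x (w.length + (N + 1)) ∉ B.accept := by
    intro hc
    have := hN hc
    omega
  refine ⟨B.runFrom B.start x (w.length + (N + 1)),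
    ⟨List.ofFn (fun k : Fin (w.length + (N + 1)) => repSeq w v k),
      isStutterPath_of_sp (repSeq_prefix_sp hsp (N + 1)), ?_⟩, hn0⟩
  rw [List.map_ofFn]
  exact (runFrom_ofFn B B.start x (w.length + (N + 1))).symm

lemma accepting_cover (hL : BuchiLang B = CharLang G v₀) (hconn : G.Connected) {a b : V}
    (hadj : G.Adj a b) :
    (∃ q, IsVState G v₀ B a q ∧ q ∈ B.accept) ∨
    (∃ q, IsVState G v₀ B b q ∧ q ∈ B.accept) := by
  obtain ⟨u, hsp⟩ := sp_exists hconn a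
  set x : ℕ → V ⊕ Unit := fun k => Sum.inl (altSeq u a b k) with hx
  have hmem : x ∈ BuchiLang B := by
    rw [hL]
    exact Or.inl (altSeq_traceWord hsp hadj)
  obtain ⟨n, hn, hgt⟩ := hmem.exists_gt u.length
  obtain ⟨t, rfl⟩ : ∃ t, n = u.length + t := ⟨n - u.length, by omega⟩
  have hvs : IsVState G v₀ B (if Even t then a else b)
      (B.runFrom B.start x (u.length + t)) := by
    refine ⟨List.ofFn (fun k : Fin (u.length + t) => altSeq u a b k),
      isStutterPath_of_sp (altSeq_prefix_sp hsp hadj t), ?_⟩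
    rw [List.map_ofFn]
    exact (runFrom_ofFn B B.start x (u.length + t)).symm
  rcases Nat.even_or_odd t with he | ho
  · rw [if_pos he] at hvs
    exact Or.inl ⟨_, hvs, hn⟩
  · rw [if_neg (Nat.not_even_iff_odd.mpr ho)] at hvs
    exact Or.inr ⟨_, hvs, hn⟩

end Aux

open Aux

theorem state_lower_bound_of_min_cover {V : Type} [Fintype V]
    (G : SimpleGraph V) (v₀ : V) (hconn : G.Connected) (hcard : 1 < Fintype.card V)
    (τ : ℕ)
    (hτ : IsLeast {k : ℕ | ∃ C : Finset V,
        (∀ a b : V, G.Adj a b → a ∈ C ∨ b ∈ C) ∧ C.card = k} τ) :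
    ∀ (σ : Type) (_ : Fintype σ) (B : DFA (V ⊕ Unit) σ),
      BuchiLang B = CharLang G v₀ → 2 * Fintype.card V + τ ≤ Fintype.card σ := by
  intro σ instσ B hL
  classical
  have hvex : ∀ v : V, ∃ q, IsVState G v₀ B v q ∧ q ∉ B.accept := fun v =>
    exists_nonacc_vstate hL v (sp_exists hconn v)
  choose qf hqf1 hqf2 using hvex
  set pf : V → σ := fun v => B.step (qf v) (Sum.inr ()) with hpfdef
  have hpf : ∀ v, IsNatState G v₀ B v (pf v) := fun v => ⟨qf v, hqf1 v, rfl⟩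
  set C : Finset V :=
    Finset.univ.filter (fun v => ∃ q, IsVState G v₀ B v q ∧ q ∈ B.accept) with hC
  have hcover : ∀ a b : V, G.Adj a b → a ∈ C ∨ b ∈ C := by
    intro a b hab
    rcases accepting_cover hL hconn hab with h | h
    · exact Or.inl (by simp only [hC, Finset.mem_filter, Finset.mem_univ, true_and]; exact h)
    · exact Or.inr (by simp only [hC, Finset.mem_filter, Finset.mem_univ, true_and]; exact h)
  have hτC : τ ≤ C.card := hτ.2 ⟨C, hcover, rfl⟩
  have hrex : ∀ v : V, ∃ q, v ∈ C → IsVState G v₀ B v q ∧ q ∈ B.accept := by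
    intro v
    by_cases h : v ∈ C
    · obtain ⟨q, hq⟩ := (Finset.mem_filter.mp h).2
      exact ⟨q, fun _ => hq⟩
    · exact ⟨qf v, fun hc => absurd hc h⟩
  choose rf hrf using hrex
  have hqinj : Function.Injective qf := fun v w h =>
    vstate_unique hL (hqf1 v) (h ▸ hqf1 w)
  have hpinj : Function.Injective pf := fun v w h =>
    natstate_unique hL (hpf v) (h ▸ hpf w)
  have hrinj : Set.InjOn rf ↑C := fun v hv w hw h =>
    vstate_unique hL ((hrf v hv).1) (h ▸ (hrf w hw).1)
  have d1 : Disjoint (Finset.univ.image qf) (Finset.univ.image pf) := by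
    rw [Finset.disjoint_left]
    rintro s hs1 hs2
    simp only [Finset.mem_image, Finset.mem_univ, true_and] at hs1 hs2
    obtain ⟨v, rfl⟩ := hs1
    obtain ⟨w, heq⟩ := hs2
    exact vstate_not_natstate hL (hqf1 v) (heq ▸ hpf w)
  have d2 : Disjoint (Finset.univ.image qf ∪ Finset.univ.image pf) (C.image rf) := by
    rw [Finset.disjoint_left]
    rintro s hs1 hs2
    simp only [Finset.mem_image] at hs2
    obtain ⟨v, hvC, rfl⟩ := hs2
    have hrv := hrf v hvC
    rcases Finset.mem_union.mp hs1 with h | h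
    · simp only [Finset.mem_image, Finset.mem_univ, true_and] at h
      obtain ⟨w, heq⟩ := h
      exact hqf2 w (heq.symm ▸ hrv.2)
    · simp only [Finset.mem_image, Finset.mem_univ, true_and] at h
      obtain ⟨w, heq⟩ := h
      exact vstate_not_natstate hL hrv.1 (heq ▸ hpf w)
  have c1 : (Finset.univ.image qf).card = Fintype.card V := by
    rw [Finset.card_image_of_injective _ hqinj, Finset.card_univ]
  have c2 : (Finset.univ.image pf).card = Fintype.card V := by
    rw [Finset.card_image_of_injective _ hpinj, Finset.card_univ]
  have c3 : (C.image rf).card = C.card := Finset.card_image_of_injOn hrinj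
  have hT : ((Finset.univ.image qf ∪ Finset.univ.image pf) ∪ C.image rf).card
      = 2 * Fintype.card V + C.card := by
    rw [Finset.card_union_of_disjoint d2, Finset.card_union_of_disjoint d1, c1, c2, c3]
    ring
  calc 2 * Fintype.card V + τ ≤ 2 * Fintype.card V + C.card := by omega
    _ = _ := hT.symm
    _ ≤ Fintype.card σ := Finset.card_le_univ _
end

section
/- Let G_{v₀} = (V, E) be a nice graph and let C be a vertex cover of G. Then there exists a deterministic Büchi automaton over the alphabet V_♮ whose state type has cardinality 2·|V| + |C| + 2 (the states being V × {r, ♮}, C × {a}, an accepting sink ⊤, and a rejecting sink ⊥) and whose Büchi language equals L(G_{v₀}). -/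
section SPsec
open scoped Classical
variable {V : Type} (G : SimpleGraph V) (v₀ : V)
variable {V : Type} (G : SimpleGraph V) (v₀ : V)

inductive SP (G : SimpleGraph V) (v₀ : V) : List V → V → Prop
  | nil : SP G v₀ [] v₀
  | stay {w u} : SP G v₀ w u → SP G v₀ (w ++ [u]) u
  | move {w u x} : SP G v₀ w u → G.Adj u x → SP G v₀ (w ++ [x]) x

lemma flatten_block (g : ℕ → List V) (n : ℕ) :
    ((List.range (n+1)).map g).flatten = ((List.range n).map g).flatten ++ g n := by
  rw [List.range_succ, List.map_append, List.flatten_append]; simp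

lemma flatten_map_range_congr {g g' : ℕ → List V} {n : ℕ} (h : ∀ j, j < n → g j = g' j) :
    ((List.range n).map g).flatten = ((List.range n).map g').flatten := by
  congr 1
  apply List.map_congr_left
  intro j hj
  exact h j (List.mem_range.mp hj)

lemma sp_rep {w : List V} {u : V} (h : SP G v₀ w u) : ∀ k, SP G v₀ (w ++ List.replicate k u) u := by
  intro k
  induction k with
  | zero => simpa using h
  | succ k ih =>
      rw [List.replicate_succ', ← List.append_assoc]
      exact ih.stay

lemma sp_of_isStutterPath {w : List V} {u : V} (h : IsStutterPath G v₀ w u) : SP G v₀ w u := by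
  obtain ⟨n, v, i, h0, hadj, hi, hu, hw⟩ := h
  subst hw hu h0
  induction n with
  | zero =>
      rw [flatten_block]
      have := sp_rep G (v 0) SP.nil (i 0)
      simpa using this
  | succ n ih =>
      rw [flatten_block]
      have hsp : SP G (v 0)
          (((List.range (n+1)).map (fun j => List.replicate (i j) (v j))).flatten) (v n) :=
        ih (fun j hj => hadj j (hj.trans (Nat.lt_succ_self n)))
          (fun j h1 h2 => hi j h1 (h2.trans (Nat.le_succ n)))
      obtain ⟨k, hk⟩ : ∃ k, i (n+1) = k + 1 :=
        ⟨i (n+1) - 1, (Nat.succ_pred_eq_of_pos (hi (n+1) (Nat.le_add_left 1 n) le_rfl)).symm⟩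
      rw [hk, List.replicate_succ]
      have heq : ∀ (L : List V), L ++ (v (n+1) :: List.replicate k (v (n+1)))
          = (L ++ [v (n+1)]) ++ List.replicate k (v (n+1)) := by simp
      rw [heq]
      exact sp_rep G (v 0) (hsp.move (hadj n (Nat.lt_succ_self n))) k

lemma isStutterPath_of_sp {w : List V} {u : V} (h : SP G v₀ w u) : IsStutterPath G v₀ w u := by
  induction h with
  | nil =>
      refine ⟨0, fun _ => v₀, fun _ => 0, rfl, ?_, ?_, rfl, ?_⟩ <;> simp <;> omega
  | @stay w u hsp ih =>
      obtain ⟨n, v, i, h0, hadj, hi, hu, hw⟩ := ih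
      refine ⟨n, v, Function.update i n (i n + 1), h0, hadj, ?_, hu, ?_⟩
      · intro j h1 h2
        rcases eq_or_ne j n with rfl | hne
        · simp [Function.update]
        · simpa [Function.update, hne] using hi j h1 h2
      · rw [hw, flatten_block, flatten_block, List.append_assoc]
        rw [flatten_map_range_congr (g := fun j => List.replicate (i j) (v j))
          (g' := fun j => List.replicate (Function.update i n (i n + 1) j) (v j))
          (fun j hj => by simp [Function.update, Nat.ne_of_lt hj])]
        congr 1
        simp [Function.update, List.replicate_succ', hu]
  | @move w u x hsp hadj' ih =>
      obtain ⟨n, v, i, h0, hadjp, hi, hu, hw⟩ := ih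
      refine ⟨n+1, fun j => if j ≤ n then v j else x, fun j => if j ≤ n then i j else 1,
        by simp [h0], ?_, ?_, by simp, ?_⟩
      · intro j hj
        rcases Nat.lt_or_ge j n with hlt | hge
        · simpa [Nat.le_of_lt hlt, Nat.succ_le_of_lt hlt] using hadjp j hlt
        · have hj' : j = n := by omega
          subst hj'
          simpa [Nat.lt_irrefl, hu] using hadj'
      · intro j h1 h2
        rcases le_or_gt j n with hle | hgt
        · simpa [hle] using hi j h1 hle
        · simp [Nat.not_le.mpr hgt]
      · rw [hw, flatten_block (n := n+1)]
        rw [flatten_map_range_congr (g := fun j => List.replicate (i j) (v j))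
          (g' := fun j => List.replicate (if j ≤ n then i j else 1) (if j ≤ n then v j else x))
          (fun j hj => by simp [Nat.lt_succ_iff.mp hj])]
        congr 1
        simp [Nat.lt_irrefl]
end SPsec

section ArithSec
open scoped Classical


/-- A step-1 sequence starting at 0 that is unbounded hits every value below any attained value. -/
lemma step_hits (M : ℕ → ℕ) (h0 : M 0 = 0) (hstep : ∀ n, M (n+1) ≤ M n + 1)
    {k j : ℕ} (hj : j ≤ M k) : ∃ t, t ≤ k ∧ M t = j := by
  have hex : ∃ t, j ≤ M t := ⟨k, hj⟩
  refine ⟨Nat.find hex, Nat.find_min' hex hj, ?_⟩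
  rcases Nat.eq_zero_or_pos j with rfl | hjpos
  · have : Nat.find hex = 0 := Nat.le_zero.mp (Nat.find_min' hex (by omega))
    rw [this, h0]
  · have hfs := Nat.find_spec hex
    have hpos : 0 < Nat.find hex := by
      rcases Nat.eq_zero_or_pos (Nat.find hex) with h | h
      · rw [h, h0] at hfs; omega
      · exact h
    have hprev : ¬ j ≤ M (Nat.find hex - 1) := Nat.find_min hex (by omega)
    have := hstep (Nat.find hex - 1)
    have heq : Nat.find hex - 1 + 1 = Nat.find hex := by omega
    rw [heq] at this
    omega

lemma step_surj (M : ℕ → ℕ) (h0 : M 0 = 0) (hstep : ∀ n, M (n+1) ≤ M n + 1)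
    (hub : ∀ m, ∃ n, m ≤ M n) (j : ℕ) : ∃ t, M t = j := by
  obtain ⟨n, hn⟩ := hub j
  obtain ⟨t, _, ht⟩ := step_hits M h0 hstep hn
  exact ⟨t, ht⟩

/-- Extraction of a trace structure from a run that moves infinitely often. -/
lemma trace_extract {V : Type} (G : SimpleGraph V) (v₀ : V) (curr : ℕ → V)
    (h0 : curr 0 = v₀)
    (hstep : ∀ n, curr (n+1) = curr n ∨ G.Adj (curr n) (curr (n+1)))
    (hinf : {n | curr (n+1) ≠ curr n}.Infinite) :
    ∃ (v : ℕ → V) (f : ℕ → ℕ), v 0 = v₀ ∧ (∀ j, G.Adj (v j) (v (j+1))) ∧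
      f 0 ≤ 1 ∧ (∀ n, f n ≤ f (n+1) ∧ f (n+1) ≤ f n + 1) ∧
      (∀ m, ∃ n, m ≤ f n) ∧ (∀ n, curr (n+1) = v (f n)) := by
  set M : ℕ → ℕ := fun n => ((Finset.range n).filter (fun k => curr (k+1) ≠ curr k)).card with hM
  have hM0 : M 0 = 0 := by simp [hM]
  have hMsucc : ∀ n, M (n+1) = if curr (n+1) ≠ curr n then M n + 1 else M n := by
    intro n
    simp only [hM, Finset.range_add_one, Finset.filter_insert]
    split
    · rw [Finset.card_insert_of_notMem (by simp)]
    · rfl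
  have hMstep : ∀ n, M (n+1) ≤ M n + 1 := by
    intro n; rw [hMsucc]; split <;> omega
  have hMmono : Monotone M := by
    apply monotone_nat_of_le_succ
    intro n; rw [hMsucc]; split <;> omega
  have hMub : ∀ m, ∃ n, m ≤ M n := by
    intro m
    induction m with
    | zero => exact ⟨0, Nat.zero_le _⟩
    | succ m ih =>
        obtain ⟨n, hn⟩ := ih
        obtain ⟨k, hk, hkn⟩ := hinf.exists_gt n
        refine ⟨k + 1, ?_⟩
        have : M (k+1) = M k + 1 := by rw [hMsucc]; exact if_pos hk
        have := hMmono (Nat.le_of_lt hkn) (a := n) (b := k)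
        omega
  have hsurj : ∀ j, ∃ t, M t = j := step_surj M hM0 hMstep hMub
  set N : ℕ → ℕ := fun j => Nat.find (hsurj j) with hN
  have hNspec : ∀ j, M (N j) = j := fun j => Nat.find_spec (hsurj j)
  have hNmin : ∀ j t, M t = j → N j ≤ t := fun j t ht => Nat.find_min' (hsurj j) ht
  -- M k = j for N j ≤ k < N (j+1)
  have hMk : ∀ j k, N j ≤ k → k < N (j+1) → M k = j := by
    intro j k h1 h2
    have hge : j ≤ M k := (hNspec j) ▸ hMmono h1
    by_contra hne
    have : j + 1 ≤ M k := by omega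
    obtain ⟨t, ht1, ht2⟩ := step_hits M hM0 hMstep this
    have := hNmin (j+1) t ht2
    omega
  -- curr constant on [N j, N (j+1))
  have hconst : ∀ j k, N j ≤ k → k < N (j+1) → curr k = curr (N j) := by
    intro j k
    induction k with
    | zero => intro h1 _; have : N j = 0 := by omega
              rw [this]
    | succ k ih =>
        intro h1 h2
        rcases Nat.lt_or_ge (N j) (k+1) with hlt | hge
        · have hk1 : N j ≤ k := by omega
          have hk2 : k < N (j+1) := by omega
          have hnomove : curr (k+1) = curr k := by
            by_contra hmv
            have := hMsucc k
            rw [if_pos hmv] at this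
            have e1 := hMk j k hk1 hk2
            have e2 := hMk j (k+1) h1 h2
            omega
          rw [hnomove]
          exact ih hk1 hk2
        · have : N j = k + 1 := by omega
          rw [this]
  have hNlt : ∀ j, N j < N (j+1) := by
    intro j
    rcases Nat.lt_or_ge (N j) (N (j+1)) with h | h
    · exact h
    · exfalso
      have := hMmono h
      rw [hNspec, hNspec] at this
      omega
  set v : ℕ → V := fun j => curr (N j) with hv
  refine ⟨v, fun n => M (n+1), ?_, ?_, ?_, ?_, ?_, ?_⟩
  · have : N 0 = 0 := Nat.le_zero.mp (hNmin 0 0 hM0)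
    simp [hv, this, h0]
  · intro j
    have hpos : 0 < N (j+1) := lt_of_le_of_lt (Nat.zero_le _) (hNlt j)
    set t := N (j+1) - 1 with htdef
    have ht1 : t + 1 = N (j+1) := by omega
    have hMt : M t = j := by
      have hle : M t ≤ j + 1 := by
        have := hMmono (Nat.le_of_lt (by omega : t < N (j+1)))
        rw [hNspec] at this; exact this
      have hne : M t ≠ j + 1 := fun h => by have := hNmin (j+1) t h; omega
      have : M (t+1) ≤ M t + 1 := hMstep t
      rw [ht1, hNspec] at this
      omega
    have hNjt : N j ≤ t := hNmin j t hMt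
    have htlt : t < N (j+1) := by omega
    have hcurrt : curr t = v j := hconst j t hNjt htlt
    have hmv : curr (t+1) ≠ curr t := by
      intro hcc
      have := hMsucc t
      rw [if_neg (by simpa using hcc)] at this
      rw [ht1, hNspec] at this
      omega
    have := hstep t
    rcases this with h | h
    · exact absurd h hmv
    · rw [hcurrt] at h
      rw [ht1] at h
      exact h
  · have := hMstep 0; rw [hM0] at this; exact this
  · intro n; exact ⟨hMmono (Nat.le_succ _), hMstep (n+1)⟩
  · intro m
    obtain ⟨n, hn⟩ := hMub m
    exact ⟨n, le_trans hn (hMmono (Nat.le_succ n))⟩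
  · intro n
    set j := M (n+1) with hj
    have h1 : N j ≤ n + 1 := hNmin j (n+1) rfl
    have h2 : n + 1 < N (j+1) := by
      by_contra h
      have := hMmono (Nat.le_of_not_lt h)
      rw [hNspec] at this
      omega
    exact hconst j (n+1) h1 h2

end ArithSec

open scoped Classical

section BuchiAux

variable {V : Type} (G : SimpleGraph V) (v₀ : V) (C : Finset V)

/-- State type of the Büchi automaton: `V × {r, ♮}`, `C × {a}`, `⊤`, `⊥`. -/
abbrev BSt (V : Type) (C : Finset V) : Type := (V × Bool) ⊕ ({c // c ∈ C} ⊕ Bool)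

def stR (v : V) : BSt V C := Sum.inl (v, false)
def stN (v : V) : BSt V C := Sum.inl (v, true)
def stA (c : {c // c ∈ C}) : BSt V C := Sum.inr (Sum.inl c)
def stTop : BSt V C := Sum.inr (Sum.inr true)
def stBot : BSt V C := Sum.inr (Sum.inr false)

noncomputable def toV (u : V) : BSt V C :=
  if h : u ∈ C then stA C ⟨u, h⟩ else stR C u

noncomputable def stepFrom (v : V) : (V ⊕ Unit) → BSt V C
  | Sum.inl u => if u = v then stR C v else if G.Adj v u then toV C u else stBot C
  | Sum.inr _ => stN C v

noncomputable def BAstep : BSt V C → (V ⊕ Unit) → BSt V C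
  | Sum.inl (v, false), x => stepFrom G C v x
  | Sum.inl (v, true), x =>
      match x with
      | Sum.inl u => if u = v then stTop C else stBot C
      | Sum.inr _ => stBot C
  | Sum.inr (Sum.inl c), x => stepFrom G C c.1 x
  | Sum.inr (Sum.inr true), _ => stTop C
  | Sum.inr (Sum.inr false), _ => stBot C

noncomputable def BA : DFA (V ⊕ Unit) (BSt V C) where
  step := BAstep G C
  start := stR C v₀
  accept := {q | (∃ c, q = stA C c) ∨ q = stTop C}

def VSt (v : V) (q : BSt V C) : Prop :=
  q = stR C v ∨ ∃ h : v ∈ C, q = stA C ⟨v, h⟩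

lemma toV_VSt (u : V) : VSt C u (toV C u) := by
  unfold toV VSt; split <;> simp_all

lemma VSt_unique {v v' : V} {q : BSt V C} (h : VSt C v q) (h' : VSt C v' q) : v = v' := by
  rcases h with h | ⟨_, h⟩ <;> rcases h' with h' | ⟨_, h'⟩ <;> subst h <;> simp_all [stR, stA]

lemma VSt_step {v : V} {q : BSt V C} (h : VSt C v q) (x : V ⊕ Unit) :
    BAstep G C q x = stepFrom G C v x := by
  rcases h with h | ⟨_, h⟩ <;> subst h <;> rfl

lemma stepFrom_inl (v u : V) : stepFrom G C v (Sum.inl u)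
    = if u = v then stR C v else if G.Adj v u then toV C u else stBot C := rfl
lemma stepFrom_inr (v : V) (x : Unit) : stepFrom G C v (Sum.inr x) = stN C v := rfl

lemma toV_ne_top (u : V) : toV C u ≠ stTop C := by
  unfold toV; split <;> simp [stA, stR, stTop]
lemma toV_ne_bot (u : V) : toV C u ≠ stBot C := by
  unfold toV; split <;> simp [stA, stR, stBot]
lemma toV_ne_N (u w : V) : toV C u ≠ stN C w := by
  unfold toV; split <;> simp [stA, stR, stN]

lemma not_VSt_N (u w : V) : ¬ VSt C u (stN C w) := by
  rintro (h | ⟨_, h⟩) <;> simp_all [stN, stR, stA]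
lemma not_VSt_top (u : V) : ¬ VSt C u (stTop C) := by
  rintro (h | ⟨_, h⟩) <;> simp_all [stTop, stR, stA]
lemma not_VSt_bot (u : V) : ¬ VSt C u (stBot C) := by
  rintro (h | ⟨_, h⟩) <;> simp_all [stBot, stR, stA]

lemma stepFrom_ne_top (v : V) (x : V ⊕ Unit) : stepFrom G C v x ≠ stTop C := by
  rcases x with u | u
  · rw [stepFrom_inl]
    split
    · simp [stR, stTop]
    · split
      · exact toV_ne_top C u
      · simp [stBot, stTop]
  · rw [stepFrom_inr]; simp [stN, stTop]

lemma stepFrom_eq_N {v w : V} {x : V ⊕ Unit} (h : stepFrom G C v x = stN C w) :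
    v = w ∧ x = Sum.inr () := by
  rcases x with u | u
  · rw [stepFrom_inl] at h
    exfalso
    revert h
    split
    · simp [stR, stN]
    · split
      · exact toV_ne_N C _ _
      · simp [stBot, stN]
  · rw [stepFrom_inr] at h
    simp [stN] at h
    exact ⟨h, rfl⟩

lemma stepFrom_eq_A {v : V} {c : {c // c ∈ C}} {x : V ⊕ Unit}
    (h : stepFrom G C v x = stA C c) : x = Sum.inl c.1 ∧ c.1 ≠ v ∧ G.Adj v c.1 := by
  rcases x with u | u
  · rw [stepFrom_inl] at h
    by_cases h1 : u = v
    · rw [if_pos h1] at h; simp [stR, stA] at h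
    · rw [if_neg h1] at h
      by_cases h2 : G.Adj v u
      · rw [if_pos h2] at h
        unfold toV at h
        split at h
        · simp [stA] at h
          cases h
          exact ⟨rfl, h1, h2⟩
        · simp [stR, stA] at h
      · rw [if_neg h2] at h; simp [stBot, stA] at h
  · rw [stepFrom_inr] at h; simp [stN, stA] at h

lemma stepFrom_into_vst {v u : V} {x : V ⊕ Unit} (h : VSt C u (stepFrom G C v x)) :
    x = Sum.inl u ∧ (u = v ∨ G.Adj v u) := by
  rcases x with u' | u'
  · rw [stepFrom_inl] at h
    by_cases h1 : u' = v
    · rw [if_pos h1] at h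
      have huv : u = v := VSt_unique C h (Or.inl rfl)
      exact ⟨by rw [h1, huv], Or.inl huv⟩
    · by_cases h2 : G.Adj v u'
      · rw [if_neg h1, if_pos h2] at h
        have huu : u = u' := VSt_unique C h (toV_VSt C u')
        exact ⟨by rw [huu], Or.inr (by rwa [huu])⟩
      · rw [if_neg h1, if_neg h2] at h
        exact absurd h (not_VSt_bot C u)
  · rw [stepFrom_inr] at h
    exact absurd h (not_VSt_N C u v)

lemma step_into_vst {q : BSt V C} {x : V ⊕ Unit} {u : V}
    (h : VSt C u (BAstep G C q x)) :
    ∃ v, VSt C v q ∧ x = Sum.inl u ∧ (u = v ∨ G.Adj v u) := by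
  rcases q with ⟨v, b⟩ | c | b
  · cases b
    · exact ⟨v, Or.inl rfl, stepFrom_into_vst G C (h : VSt C u (stepFrom G C v x))⟩
    · exfalso
      rcases x with u' | u'
      · have h' : VSt C u (if u' = v then stTop C else stBot C) := h
        split at h'
        · exact not_VSt_top C u h'
        · exact not_VSt_bot C u h'
      · exact not_VSt_bot C u h
  · exact ⟨c.1, Or.inr ⟨c.2, rfl⟩, stepFrom_into_vst G C (h : VSt C u (stepFrom G C c.1 x))⟩
  · cases b
    · exact absurd (h : VSt C u (stBot C)) (not_VSt_bot C u)
    · exact absurd (h : VSt C u (stTop C)) (not_VSt_top C u)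

lemma step_eq_top {q : BSt V C} {x : V ⊕ Unit} (h : BAstep G C q x = stTop C) :
    q = stTop C ∨ ∃ v, q = stN C v ∧ x = Sum.inl v := by
  rcases q with ⟨v, b⟩ | c | b
  · cases b
    · exact absurd (h : stepFrom G C v x = stTop C) (stepFrom_ne_top G C v x)
    · rcases x with u' | u'
      · have h' : (if u' = v then stTop C else stBot C) = stTop C := h
        split at h'
        · exact Or.inr ⟨v, rfl, by simp_all⟩
        · simp [stBot, stTop] at h'
      · simp [BAstep, stBot, stTop] at h
  · exact absurd (h : stepFrom G C c.1 x = stTop C) (stepFrom_ne_top G C c.1 x)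
  · cases b
    · simp [BAstep, stBot, stTop] at h
    · exact Or.inl rfl

lemma step_eq_N {q : BSt V C} {x : V ⊕ Unit} {v : V} (h : BAstep G C q x = stN C v) :
    VSt C v q ∧ x = Sum.inr () := by
  rcases q with ⟨w, b⟩ | c | b
  · cases b
    · obtain ⟨hw, hx⟩ := stepFrom_eq_N G C (h : stepFrom G C w x = stN C v)
      exact ⟨Or.inl (by rw [hw]; rfl), hx⟩
    · exfalso
      rcases x with u' | u'
      · have h' : (if u' = w then stTop C else stBot C) = stN C v := h
        split at h' <;> simp [stTop, stBot, stN] at h'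
      · simp [BAstep, stBot, stN] at h
  · obtain ⟨hw, hx⟩ := stepFrom_eq_N G C (h : stepFrom G C c.1 x = stN C v)
    exact ⟨Or.inr ⟨hw ▸ c.2, by cases hw; rfl⟩, hx⟩
  · cases b
    · simp [BAstep, stBot, stN] at h
    · simp [BAstep, stTop, stN] at h

lemma card_BSt [Fintype V] : Fintype.card (BSt V C) = 2 * Fintype.card V + C.card + 2 := by
  simp [BSt, Fintype.card_sum, Fintype.card_prod, Fintype.card_coe]; ring

end BuchiAux

section BuchiRun

open scoped Classical

variable {V : Type} (G : SimpleGraph V) (v₀ : V) (C : Finset V) (α : ℕ → V ⊕ Unit)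

lemma run_zero : (BA G v₀ C).runFrom (BA G v₀ C).start α 0 = stR C v₀ := rfl

lemma run_succ (n : ℕ) :
    (BA G v₀ C).runFrom (BA G v₀ C).start α (n+1)
      = BAstep G C ((BA G v₀ C).runFrom (BA G v₀ C).start α n) (α n) := rfl

lemma letters_restrict {w : List V} {z : V}
    (hw : ∀ k : Fin (w ++ [z]).length, α k = Sum.inl ((w ++ [z]).get k)) :
    ∀ k : Fin w.length, α k = Sum.inl (w.get k) := by
  rintro ⟨k, hk⟩
  have h2 : k < (w ++ [z]).length := by simp; omega
  have := hw ⟨k, h2⟩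
  simp only [List.get_eq_getElem] at this ⊢
  rwa [List.getElem_append_left hk] at this

lemma letters_last {w : List V} {z : V}
    (hw : ∀ k : Fin (w ++ [z]).length, α k = Sum.inl ((w ++ [z]).get k)) :
    α w.length = Sum.inl z := by
  have h2 : w.length < (w ++ [z]).length := by simp
  have := hw ⟨w.length, h2⟩
  simp only [List.get_eq_getElem] at this
  rwa [List.getElem_concat_length rfl] at this

lemma letters_snoc {w : List V} {z : V}
    (hw : ∀ k : Fin w.length, α k = Sum.inl (w.get k)) (hz : α w.length = Sum.inl z) :
    ∀ k : Fin (w ++ [z]).length, α k = Sum.inl ((w ++ [z]).get k) := by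
  rintro ⟨k, hk⟩
  have hk' : k < w.length + 1 := by simpa using hk
  simp only [List.get_eq_getElem]
  rcases Nat.lt_or_ge k w.length with hlt | hge
  · rw [List.getElem_append_left hlt]
    have := hw ⟨k, hlt⟩
    simpa using this
  · have hke : k = w.length := by omega
    subst hke
    rw [List.getElem_concat_length rfl]
    exact hz

lemma sp_run {w : List V} {u : V} (h : SP G v₀ w u)
    (hw : ∀ k : Fin w.length, α k = Sum.inl (w.get k)) :
    VSt C u ((BA G v₀ C).runFrom (BA G v₀ C).start α w.length) := by
  induction h with
  | nil => exact Or.inl rfl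
  | @stay w u hsp ih =>
      have hlast := letters_last α hw
      have ihv := ih (letters_restrict α hw)
      have hlen : (w ++ [u]).length = w.length + 1 := by simp
      rw [hlen, run_succ, VSt_step G C ihv, hlast, stepFrom_inl, if_pos rfl]
      exact Or.inl rfl
  | @move w u x hsp hadj ih =>
      have hlast := letters_last α hw
      have ihv := ih (letters_restrict α hw)
      have hlen : (w ++ [x]).length = w.length + 1 := by simp
      rw [hlen, run_succ, VSt_step G C ihv, hlast, stepFrom_inl, if_neg hadj.ne',
        if_pos hadj]
      exact toV_VSt C x

lemma run_sp : ∀ (n : ℕ) (u : V),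
    VSt C u ((BA G v₀ C).runFrom (BA G v₀ C).start α n) →
    ∃ w : List V, SP G v₀ w u ∧ w.length = n ∧
      ∀ k : Fin w.length, α k = Sum.inl (w.get k) := by
  intro n
  induction n with
  | zero =>
      intro u h
      have : u = v₀ := VSt_unique C h (Or.inl rfl)
      subst this
      exact ⟨[], SP.nil, rfl, fun k => absurd k.2 (by simp)⟩
  | succ n ih =>
      intro u h
      rw [run_succ] at h
      obtain ⟨v, hv, hx, hrel⟩ := step_into_vst G C h
      obtain ⟨w, hsp, hlen, hlet⟩ := ih v hv
      have hαn : α w.length = Sum.inl u := by rw [hlen]; exact hx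
      rcases hrel with rfl | hadj
      · exact ⟨w ++ [u], hsp.stay, by simp [hlen], letters_snoc α hlet hαn⟩
      · exact ⟨w ++ [u], hsp.move hadj, by simp [hlen], letters_snoc α hlet hαn⟩

lemma run_top_forever {n : ℕ}
    (h : (BA G v₀ C).runFrom (BA G v₀ C).start α n = stTop C) :
    ∀ m, n ≤ m → (BA G v₀ C).runFrom (BA G v₀ C).start α m = stTop C := by
  intro m hm
  induction m, hm using Nat.le_induction with
  | base => exact h
  | succ m hm ih => rw [run_succ, ih]; rfl

lemma run_bot_forever {n : ℕ}
    (h : (BA G v₀ C).runFrom (BA G v₀ C).start α n = stBot C) :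
    ∀ m, n ≤ m → (BA G v₀ C).runFrom (BA G v₀ C).start α m = stBot C := by
  intro m hm
  induction m, hm using Nat.le_induction with
  | base => exact h
  | succ m hm ih => rw [run_succ, ih]; rfl

end BuchiRun

theorem exists_buchi_of_cover {V : Type} [Fintype V]
    (G : SimpleGraph V) (v₀ : V) (hconn : G.Connected) (hcard : 1 < Fintype.card V)
    (C : Finset V) (hC : ∀ a b : V, G.Adj a b → a ∈ C ∨ b ∈ C) :
    ∃ (σ : Type) (_ : Fintype σ) (B : DFA (V ⊕ Unit) σ),
      Fintype.card σ = 2 * Fintype.card V + C.card + 2 ∧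
      BuchiLang B = CharLang G v₀ := by
  classical
  refine ⟨BSt V C, inferInstance, BA G v₀ C, card_BSt C, ?_⟩
  ext α
  simp only [BuchiLang, Set.mem_setOf_eq, CharLang]
  have haccept : ∀ q : BSt V C, q ∈ (BA G v₀ C).accept ↔ ((∃ c, q = stA C c) ∨ q = stTop C) :=
    fun q => Iff.rfl
  constructor
  · -- accepted → in the characteristic language
    intro hacc
    have hbot : ∀ n, (BA G v₀ C).runFrom (BA G v₀ C).start α n ≠ stBot C := by
      intro n hn
      have hsub : {k | (BA G v₀ C).runFrom (BA G v₀ C).start α k ∈ (BA G v₀ C).accept}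
          ⊆ Set.Iio n := by
        intro k hk
        by_contra hlt
        rw [Set.mem_Iio, not_lt] at hlt
        have hbk := run_bot_forever G v₀ C α hn k hlt
        simp only [Set.mem_setOf_eq] at hk
        rw [hbk, haccept] at hk
        rcases hk with ⟨c, hc⟩ | hc <;> simp [stBot, stA, stTop] at hc
      exact hacc ((Set.finite_Iio n).subset hsub)
    by_cases htop : ∃ n, (BA G v₀ C).runFrom (BA G v₀ C).start α n = stTop C
    · -- ♮-word
      right
      have hn := Nat.find_spec htop
      have hn0 : Nat.find htop ≠ 0 := by
        intro h
        rw [h, run_zero] at hn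
        simp [stR, stTop] at hn
      obtain ⟨m, hm⟩ : ∃ m, Nat.find htop = m + 1 := ⟨Nat.find htop - 1, by omega⟩
      rw [hm, run_succ] at hn
      rcases step_eq_top G C hn with hq | ⟨v, hNst, hαm⟩
      · exact absurd hq (Nat.find_min htop (by omega))
      · have hm0 : m ≠ 0 := by
          intro h
          rw [h, run_zero] at hNst
          simp [stR, stN] at hNst
        obtain ⟨p, hp⟩ : ∃ p, m = p + 1 := ⟨m - 1, by omega⟩
        rw [hp, run_succ] at hNst
        obtain ⟨hvst, hαp⟩ := step_eq_N G C hNst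
        obtain ⟨w, hsp, hlen, hlet⟩ := run_sp G v₀ C α p v hvst
        refine ⟨w, v, isStutterPath_of_sp G v₀ hsp, hlet, ?_, ?_⟩
        · rw [hlen]; exact hαp
        · rw [hlen, ← hp]; exact hαm
    · -- trace word
      left
      push_neg at htop
      have hnotN : ∀ n u, (BA G v₀ C).runFrom (BA G v₀ C).start α n ≠ stN C u := by
        intro n u hn
        have h1 : (BA G v₀ C).runFrom (BA G v₀ C).start α (n+1)
            = BAstep G C (stN C u) (α n) := by rw [run_succ, hn]
        rcases hx : α n with y | y <;> rw [hx] at h1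
        · by_cases hy : y = u
          · apply htop (n+1)
            rw [h1]
            show (if y = u then stTop C else stBot C) = stTop C
            rw [if_pos hy]
          · apply hbot (n+1)
            rw [h1]
            show (if y = u then stTop C else stBot C) = stBot C
            rw [if_neg hy]
        · exact hbot (n+1) h1
      have hvert : ∀ n, ∃ u, VSt C u ((BA G v₀ C).runFrom (BA G v₀ C).start α n) := by
        intro n
        induction n with
        | zero => exact ⟨v₀, Or.inl rfl⟩
        | succ n ih =>
            obtain ⟨u, hu⟩ := ih
            rcases hx : α n with y | y
            · by_cases hy : y = u
              · refine ⟨u, ?_⟩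
                rw [run_succ, VSt_step G C hu, hx, stepFrom_inl, if_pos hy]
                exact Or.inl rfl
              · by_cases hadj : G.Adj u y
                · refine ⟨y, ?_⟩
                  rw [run_succ, VSt_step G C hu, hx, stepFrom_inl, if_neg hy, if_pos hadj]
                  exact toV_VSt C y
                · exfalso
                  apply hbot (n+1)
                  rw [run_succ, VSt_step G C hu, hx, stepFrom_inl, if_neg hy, if_neg hadj]
            · exfalso
              apply hnotN (n+1) u
              rw [run_succ, VSt_step G C hu, hx, stepFrom_inr]
      set curr : ℕ → V := fun n => Classical.choose (hvert n) with hcurrdef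
      have hcurr : ∀ n, VSt C (curr n) ((BA G v₀ C).runFrom (BA G v₀ C).start α n) :=
        fun n => Classical.choose_spec (hvert n)
      have hcurr0 : curr 0 = v₀ := VSt_unique C (hcurr 0) (Or.inl rfl)
      have hstep' : ∀ n, (curr (n+1) = curr n ∨ G.Adj (curr n) (curr (n+1)))
          ∧ α n = Sum.inl (curr (n+1)) := by
        intro n
        have h := hcurr (n+1)
        rw [run_succ] at h
        obtain ⟨v, hv, hx, hrel⟩ := step_into_vst G C h
        have hvc : v = curr n := VSt_unique C hv (hcurr n)
        refine ⟨?_, hx⟩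
        rcases hrel with he | ha
        · exact Or.inl (he.trans hvc)
        · exact Or.inr (hvc ▸ ha)
      have hmv : {n | curr (n+1) ≠ curr n}.Infinite := by
        have hclaim : ∀ n, (BA G v₀ C).runFrom (BA G v₀ C).start α n ∈ (BA G v₀ C).accept →
            ∃ k, n = k + 1 ∧ curr (k+1) ≠ curr k := by
          intro n hn
          rw [haccept] at hn
          rcases hn with ⟨c, hc⟩ | hc
          · have hn0 : n ≠ 0 := by
              intro h
              rw [h, run_zero] at hc
              simp [stR, stA] at hc
            obtain ⟨k, rfl⟩ : ∃ k, n = k + 1 := ⟨n - 1, by omega⟩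
            refine ⟨k, rfl, ?_⟩
            have hc' := hc
            rw [run_succ, VSt_step G C (hcurr k)] at hc'
            obtain ⟨hxk, hne, hadjk⟩ := stepFrom_eq_A G C hc'
            have h1 : curr (k+1) = c.1 := by
              apply VSt_unique C (hcurr (k+1))
              rw [hc]
              exact Or.inr ⟨c.2, rfl⟩
            rw [h1]
            exact hne
          · exact absurd hc (htop n)
        have himg : {n | (BA G v₀ C).runFrom (BA G v₀ C).start α n ∈ (BA G v₀ C).accept}
            ⊆ (fun k => k + 1) '' {k | curr (k+1) ≠ curr k} := by
          intro n hn
          obtain ⟨k, rfl, hk⟩ := hclaim n hn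
          exact ⟨k, hk, rfl⟩
        by_contra hfin
        rw [Set.not_infinite] at hfin
        exact hacc ((hfin.image _).subset himg)
      obtain ⟨v, f, hv0, hadj, hf0, hfs, hub, hlast⟩ :=
        trace_extract G v₀ curr hcurr0 (fun n => (hstep' n).1) hmv
      exact ⟨v, f, hv0, hadj, hf0, hfs, hub, fun n => by rw [(hstep' n).2, hlast n]⟩
  · -- in the characteristic language → accepted
    rintro (⟨v, f, hv0, hadj, hf0, hfs, hub, hα⟩ | ⟨w, u, hsp', hlet, hnatl, hnext⟩)
    · -- trace word
      set F : ℕ → ℕ := fun n => Nat.rec 0 (fun k _ => f k) n with hFdef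
      have hF0 : F 0 = 0 := rfl
      have hFsucc : ∀ n, F (n+1) = f n := fun n => rfl
      have hFstep : ∀ n, F n ≤ F (n+1) ∧ F (n+1) ≤ F n + 1 := by
        intro n
        cases n with
        | zero => exact ⟨Nat.zero_le _, by rw [hFsucc, hF0]; omega⟩
        | succ n => rw [hFsucc, hFsucc]; exact hfs n
      have hFub : ∀ m, ∃ n, m ≤ F n := by
        intro m
        obtain ⟨n, hn⟩ := hub m
        exact ⟨n + 1, by rw [hFsucc]; exact hn⟩
      have hFmono : Monotone F := monotone_nat_of_le_succ (fun n => (hFstep n).1)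
      have hvst : ∀ n, VSt C (v (F n)) ((BA G v₀ C).runFrom (BA G v₀ C).start α n) := by
        intro n
        induction n with
        | zero =>
            rw [run_zero, hF0, hv0]
            exact Or.inl rfl
        | succ n ih =>
            rw [run_succ, VSt_step G C ih, hα n, stepFrom_inl]
            by_cases hE : F (n+1) = F n
            · have hE' : f n = F n := hE
              rw [hE', if_pos rfl, ← hE']
              exact Or.inl rfl
            · have hE2 : f n = F n + 1 := by
                have h1 := (hFstep n).1
                have h2 := (hFstep n).2
                have h3 : F (n+1) = f n := rfl
                omega
              rw [hE2, if_neg (hadj (F n)).ne', if_pos (hadj (F n)), ← hE2]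
              exact toV_VSt C (v (f n))
      have hmvrun : ∀ n, F (n+1) = F n + 1 →
          (BA G v₀ C).runFrom (BA G v₀ C).start α (n+1) = toV C (v (F (n+1))) := by
        intro n hE
        have hE2 : f n = F n + 1 := hE
        rw [run_succ, VSt_step G C (hvst n), hα n, stepFrom_inl, hE2,
          if_neg (hadj (F n)).ne', if_pos (hadj (F n)), ← hE2]
      have hsurj : ∀ j, ∃ t, F t = j :=
        step_surj F hF0 (fun n => (hFstep n).2) hFub
      have hT : {j | 1 ≤ j ∧ v j ∈ C}.Infinite := by
        apply Set.infinite_of_forall_exists_gt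
        intro a
        rcases hC (v (a+1)) (v (a+2)) (hadj (a+1)) with h | h
        · exact ⟨a+1, ⟨by omega, h⟩, by omega⟩
        · exact ⟨a+2, ⟨by omega, h⟩, by omega⟩
      have hkey : ∀ j, 1 ≤ j → v j ∈ C →
          (BA G v₀ C).runFrom (BA G v₀ C).start α (Nat.find (hsurj j)) ∈ (BA G v₀ C).accept := by
        intro j hj1 hjC
        set nj := Nat.find (hsurj j) with hnj
        have hFnj : F nj = j := Nat.find_spec (hsurj j)
        have hnj0 : nj ≠ 0 := by
          intro h
          rw [h, hF0] at hFnj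
          omega
        obtain ⟨p, hp⟩ : ∃ p, nj = p + 1 := ⟨nj - 1, by omega⟩
        have hFp : F p = j - 1 := by
          have h1 : F p ≤ j := by
            have := hFmono (show p ≤ nj by omega)
            omega
          have h2 : F (p+1) ≤ F p + 1 := (hFstep p).2
          have h3 : F p ≠ j := by
            intro h
            have := Nat.find_min' (hsurj j) h
            omega
          rw [← hp, hFnj] at h2
          omega
        have hmove : F (p+1) = F p + 1 := by rw [← hp, hFnj, hFp]; omega
        have := hmvrun p hmove
        rw [← hp] at this
        rw [this, haccept]
        left
        refine ⟨⟨v j, hjC⟩, ?_⟩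
        rw [hFnj]
        unfold toV
        rw [dif_pos hjC]
      have hinj : Set.InjOn (fun j => Nat.find (hsurj j)) {j | 1 ≤ j ∧ v j ∈ C} := by
        intro a ha b hb hab
        have h1 : F (Nat.find (hsurj a)) = a := Nat.find_spec (hsurj a)
        have h2 : F (Nat.find (hsurj b)) = b := Nat.find_spec (hsurj b)
        simp only at hab
        rw [← h1, ← h2, hab]
      apply Set.Infinite.mono (s := (fun j => Nat.find (hsurj j)) '' {j | 1 ≤ j ∧ v j ∈ C})
      · rintro n ⟨j, ⟨hj1, hjC⟩, rfl⟩
        exact hkey j hj1 hjC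
      · exact hT.image hinj
    · -- ♮-word
      have hsp := sp_of_isStutterPath G v₀ hsp'
      have hv : VSt C u ((BA G v₀ C).runFrom (BA G v₀ C).start α w.length) :=
        sp_run G v₀ C α hsp hlet
      have hN : (BA G v₀ C).runFrom (BA G v₀ C).start α (w.length + 1) = stN C u := by
        rw [run_succ, VSt_step G C hv, hnatl, stepFrom_inr]
      have hT : (BA G v₀ C).runFrom (BA G v₀ C).start α (w.length + 2) = stTop C := by
        have : w.length + 2 = (w.length + 1) + 1 := rfl
        rw [this, run_succ, hN, hnext]
        show (if u = u then stTop C else stBot C) = stTop C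
        rw [if_pos rfl]
      apply Set.Infinite.mono (s := Set.Ici (w.length + 2))
      · intro n hn
        rw [Set.mem_setOf_eq, haccept, run_top_forever G v₀ C α hT n hn]
        exact Or.inr rfl
      · exact Set.Ici_infinite _
end

section
/- Let M₁ = (Q₁, δ₁, q₀¹, F₁) and M₂ = (Q₂, δ₂, q₀², F₂) be deterministic automata over the same finite alphabet Σ, and let p ∈ Q₁ and q ∈ Q₂ be almost equivalent states. Then for every infinite word α : ℕ → Σ, the number of positions n with (r¹ n ∈ F₁) ≠ (r² n ∈ F₂) is at most |Q₁| · |Q₂|, where r¹ and r² are the runs on α from p and from q respectively (i.e., the finite difference is uniformly bounded by the number of product states). -/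
/-- State `p` of `M₁` and state `q` of `M₂` are almost equivalent: for every
infinite word, the runs from `p` and from `q` disagree on membership in the
accepting sets only at finitely many positions. -/
def AlmostEquiv {α σ₁ σ₂ : Type*} (M₁ : DFA α σ₁) (M₂ : DFA α σ₂)
    (p : σ₁) (q : σ₂) : Prop :=
  ∀ x : ℕ → α,
    {n : ℕ | (M₁.runFrom p x n ∈ M₁.accept) ≠ (M₂.runFrom q x n ∈ M₂.accept)}.Finite

lemma runFrom_eq_of_agree {α σ : Type*} (M : DFA α σ) (p : σ) (x y : ℕ → α) :
    ∀ n, (∀ k < n, x k = y k) → M.runFrom p x n = M.runFrom p y n := by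
  intro n
  induction n with
  | zero => intro _; rfl
  | succ n ih =>
    intro hxy
    show M.step (M.runFrom p x n) (x n) = M.step (M.runFrom p y n) (y n)
    rw [ih (fun k hk => hxy k (hk.trans (Nat.lt_succ_self n))), hxy n (Nat.lt_succ_self n)]

lemma runFrom_pump {α σ : Type*} (M : DFA α σ) (p : σ) (x : ℕ → α) (m L : ℕ) (hL : 0 < L)
    (hM : M.runFrom p x (m + L) = M.runFrom p x m) :
    ∀ k, M.runFrom p (fun j => if j < m then x j else x (m + (j - m) % L)) (m + k)
        = M.runFrom p x (m + k % L) := by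
  set y : ℕ → α := fun j => if j < m then x j else x (m + (j - m) % L) with hy
  intro k
  induction k with
  | zero =>
    simp only [Nat.add_zero, Nat.zero_mod]
    exact (runFrom_eq_of_agree M p x y m (fun k hk => by simp [hy, hk])).symm
  | succ k ih =>
    have h1 : m + (k + 1) = (m + k) + 1 := by omega
    rw [h1]
    show M.step (M.runFrom p y (m + k)) (y (m + k)) = _
    have hy2 : y (m + k) = x (m + k % L) := by
      simp [hy, Nat.add_sub_cancel_left]
    rw [ih, hy2]
    have hlt : k % L < L := Nat.mod_lt k hL
    have hmod : (k + 1) % L = (k % L + 1) % L := (Nat.mod_add_mod k L 1).symm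
    by_cases hc : k % L + 1 = L
    · have h0 : (k + 1) % L = 0 := by rw [hmod, hc, Nat.mod_self]
      rw [h0]
      have h2 : m + k % L + 1 = m + L := by omega
      have h3 : M.step (M.runFrom p x (m + k % L)) (x (m + k % L))
          = M.runFrom p x (m + L) := by rw [← h2]; rfl
      rw [h3, hM, Nat.add_zero]
    · have h0 : (k + 1) % L = k % L + 1 := by
        rw [hmod]; exact Nat.mod_eq_of_lt (by omega)
      rw [h0]
      rfl

theorem almostEquiv_diff_bounded {α σ₁ σ₂ : Type} [Fintype α] [Fintype σ₁] [Fintype σ₂]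
    (M₁ : DFA α σ₁) (M₂ : DFA α σ₂) (p : σ₁) (q : σ₂)
    (h : AlmostEquiv M₁ M₂ p q) :
    ∀ x : ℕ → α,
      {n : ℕ | (M₁.runFrom p x n ∈ M₁.accept) ≠ (M₂.runFrom q x n ∈ M₂.accept)}.ncard ≤
        Fintype.card σ₁ * Fintype.card σ₂ := by
  intro x
  by_contra hc
  push_neg at hc
  set D := {n : ℕ | (M₁.runFrom p x n ∈ M₁.accept) ≠ (M₂.runFrom q x n ∈ M₂.accept)} with hD
  have hfin : D.Finite := h x
  -- pigeonhole: two positions in D with the same product state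
  have hcard : (Finset.univ : Finset (σ₁ × σ₂)).card < hfin.toFinset.card := by
    rw [Finset.card_univ, Fintype.card_prod, ← Set.ncard_eq_toFinset_card D hfin]
    exact hc
  obtain ⟨a, ha, b, hb, hab, hfab⟩ :=
    Finset.exists_ne_map_eq_of_card_lt_of_maps_to hcard
      (f := fun n => (M₁.runFrom p x n, M₂.runFrom q x n))
      (fun n _ => Finset.mem_univ _)
  rw [Set.Finite.mem_toFinset] at ha hb
  -- WLOG a < b
  obtain ⟨m, n, hmn, hm, heq1, heq2⟩ :
      ∃ m n, m < n ∧ m ∈ D ∧ M₁.runFrom p x n = M₁.runFrom p x m ∧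
        M₂.runFrom q x n = M₂.runFrom q x m := by
    rcases Nat.lt_or_ge a b with hlt | hge
    · exact ⟨a, b, hlt, ha, (congrArg Prod.fst hfab).symm, (congrArg Prod.snd hfab).symm⟩
    · exact ⟨b, a, lt_of_le_of_ne hge hab.symm, hb,
        congrArg Prod.fst hfab, congrArg Prod.snd hfab⟩
  set L := n - m with hLdef
  have hL : 0 < L := by omega
  have hmL : m + L = n := by omega
  set y : ℕ → α := fun j => if j < m then x j else x (m + (j - m) % L) with hy
  have h1 := runFrom_pump M₁ p x m L hL (by rw [hmL]; exact heq1)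
  have h2 := runFrom_pump M₂ q x m L hL (by rw [hmL]; exact heq2)
  -- every m + j * L lies in the difference set of y
  have hsub : Set.range (fun j => m + j * L) ⊆
      {k : ℕ | (M₁.runFrom p y k ∈ M₁.accept) ≠ (M₂.runFrom q y k ∈ M₂.accept)} := by
    rintro _ ⟨j, rfl⟩
    have e1 : M₁.runFrom p y (m + j * L) = M₁.runFrom p x m := by
      rw [h1 (j * L), Nat.mul_mod_left, Nat.add_zero]
    have e2 : M₂.runFrom q y (m + j * L) = M₂.runFrom q x m := by
      rw [h2 (j * L), Nat.mul_mod_left, Nat.add_zero]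
    simp only [Set.mem_setOf_eq, e1, e2]
    exact hm
  have hinj : Function.Injective (fun j => m + j * L) := by
    intro i j hij
    exact Nat.eq_of_mul_eq_mul_right hL (Nat.add_left_cancel hij)
  exact ((Set.infinite_range_of_injective hinj).mono hsub) (h y)
end

section
/- Let A and B be deterministic automata over the same finite alphabet Σ that are both weak (i.e., L_B(A) = L_C(A) and L_B(B) = L_C(B)). If L_B(A) = L_B(B), then A and B are almost equivalent. -/
/-- The co-Büchi language of a deterministic automaton: the set of infinite
words whose run from the initial state leaves the accepting set only finitely
often. -/
def CoBuchiLang {α σ : Type*} (M : DFA α σ) : Set (ℕ → α) :=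
  {x | {n | M.runFrom M.start x n ∉ M.accept}.Finite}

theorem weak_lang_eq_almostEquiv {α σ₁ σ₂ : Type} [Fintype α] [Fintype σ₁] [Fintype σ₂]
    (A : DFA α σ₁) (B : DFA α σ₂)
    (hA : BuchiLang A = CoBuchiLang A) (hB : BuchiLang B = CoBuchiLang B)
    (hL : BuchiLang A = BuchiLang B) :
    AlmostEquiv A B A.start B.start := by
  intro x
  by_cases hx : x ∈ BuchiLang A
  · have hxB : x ∈ BuchiLang B := hL ▸ hx
    have hcA : {n | A.runFrom A.start x n ∉ A.accept}.Finite := by have := hA ▸ hx; exact this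
    have hcB : {n | B.runFrom B.start x n ∉ B.accept}.Finite := by have := hB ▸ hxB; exact this
    refine (hcA.union hcB).subset ?_
    intro n hn
    by_cases h1 : A.runFrom A.start x n ∈ A.accept
    · by_cases h2 : B.runFrom B.start x n ∈ B.accept
      · exact absurd (by simp [h1, h2]) hn
      · exact Or.inr h2
    · exact Or.inl h1
  · have hxB : x ∉ BuchiLang B := hL ▸ hx
    have hfA : {n | A.runFrom A.start x n ∈ A.accept}.Finite :=
      Set.not_infinite.mp hx
    have hfB : {n | B.runFrom B.start x n ∈ B.accept}.Finite :=
      Set.not_infinite.mp hxB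
    refine (hfA.union hfB).subset ?_
    intro n hn
    by_cases h1 : A.runFrom A.start x n ∈ A.accept
    · exact Or.inl h1
    · by_cases h2 : B.runFrom B.start x n ∈ B.accept
      · exact Or.inr h2
      · exact absurd (by simp [h1, h2]) hn
end

section
/- Let A be a weak deterministic automaton over a finite alphabet Σ (i.e., L_B(A) = L_C(A)) and let C be a deterministic automaton over Σ that is almost equivalent to A. Then C is weak as well: L_B(C) = L_C(C). -/
theorem weak_of_almostEquiv_weak {α σ₁ σ₂ : Type} [Fintype α] [Fintype σ₁] [Fintype σ₂]
    (A : DFA α σ₁) (C : DFA α σ₂)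
    (hA : BuchiLang A = CoBuchiLang A) (h : AlmostEquiv A C A.start C.start) :
    BuchiLang C = CoBuchiLang C := by
  have key : ∀ (P Q : ℕ → Prop), {n | P n ≠ Q n}.Finite →
      (({n | P n}.Infinite ↔ {n | Q n}.Infinite) ∧
       ({n | ¬ P n}.Finite ↔ {n | ¬ Q n}.Finite)) := by
    intro P Q hD
    have sub1 : {n | P n} ⊆ {n | Q n} ∪ {n | P n ≠ Q n} := by
      intro n hn
      by_cases hq : Q n
      · exact Or.inl hq
      · exact Or.inr (fun e => hq (e ▸ hn))
    have sub2 : {n | Q n} ⊆ {n | P n} ∪ {n | P n ≠ Q n} := by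
      intro n hn
      by_cases hp : P n
      · exact Or.inl hp
      · exact Or.inr (fun e => hp (e ▸ hn))
    have sub3 : {n | ¬ Q n} ⊆ {n | ¬ P n} ∪ {n | P n ≠ Q n} := by
      intro n hn
      by_cases hp : P n
      · exact Or.inr (fun e => hn (e ▸ hp))
      · exact Or.inl hp
    have sub4 : {n | ¬ P n} ⊆ {n | ¬ Q n} ∪ {n | P n ≠ Q n} := by
      intro n hn
      by_cases hq : Q n
      · exact Or.inr (fun e => hn (e ▸ hq))
      · exact Or.inl hq
    constructor
    · constructor
      · intro hP
        by_contra hQ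
        rw [Set.not_infinite] at hQ
        exact hP ((hQ.union hD).subset sub1)
      · intro hQ
        by_contra hP
        rw [Set.not_infinite] at hP
        exact hQ ((hP.union hD).subset sub2)
    · exact ⟨fun hP => (hP.union hD).subset sub3, fun hQ => (hQ.union hD).subset sub4⟩
  ext x
  obtain ⟨h1, h2⟩ := key (fun n => A.runFrom A.start x n ∈ A.accept)
    (fun n => C.runFrom C.start x n ∈ C.accept) (h x)
  have hAx : x ∈ BuchiLang A ↔ x ∈ CoBuchiLang A := by rw [hA]
  simp only [BuchiLang, CoBuchiLang, Set.mem_setOf_eq] at hAx ⊢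
  rw [← h1, ← h2]
  exact hAx
end

section
/- Let A be a weak deterministic automaton over a finite alphabet Σ (i.e., L_B(A) = L_C(A)) and let D be a deterministic automaton over Σ that is almost equivalent to A and has the minimal number of states among all deterministic automata over Σ almost equivalent to A. Then D is weak, L_B(D) = L_B(A), and every weak deterministic automaton B over Σ with L_B(B) = L_B(A) has at least as many states as D. -/
private lemma inf_congr {P Q : ℕ → Prop} (h : {n | P n ≠ Q n}.Finite) :
    {n | P n}.Infinite ↔ {n | Q n}.Infinite := by
  constructor
  · intro hinf
    refine Set.Infinite.mono ?_ (hinf.diff h)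
    intro n hn
    rcases hn with ⟨hP, hne⟩
    simp only [Set.mem_setOf_eq, ne_eq, not_not] at hne ⊢
    exact hne ▸ hP
  · intro hinf
    refine Set.Infinite.mono ?_ (hinf.diff h)
    intro n hn
    rcases hn with ⟨hQ, hne⟩
    simp only [Set.mem_setOf_eq, ne_eq, not_not] at hne ⊢
    exact hne ▸ hQ

private lemma fin_congr {P Q : ℕ → Prop} (h : {n | P n ≠ Q n}.Finite) :
    {n | ¬ P n}.Finite ↔ {n | ¬ Q n}.Finite := by
  constructor
  · intro hfin
    refine Set.Finite.subset (hfin.union h) ?_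
    intro n hn
    simp only [Set.mem_setOf_eq] at hn
    by_cases hP : P n
    · exact Or.inr (by simp only [Set.mem_setOf_eq, ne_eq, eq_iff_iff]; tauto)
    · exact Or.inl hP
  · intro hfin
    refine Set.Finite.subset (hfin.union h) ?_
    intro n hn
    simp only [Set.mem_setOf_eq] at hn
    by_cases hQ : Q n
    · exact Or.inr (by simp only [Set.mem_setOf_eq, ne_eq, eq_iff_iff]; tauto)
    · exact Or.inl hQ

theorem minimal_almostEquiv_of_weak_is_minimal_weak
    {α σA σD : Type} [Fintype α] [Fintype σA] [Fintype σD]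
    (A : DFA α σA) (D : DFA α σD)
    (hA : BuchiLang A = CoBuchiLang A)
    (hae : AlmostEquiv A D A.start D.start)
    (hmin : ∀ (σE : Type) (_ : Fintype σE) (E : DFA α σE),
      AlmostEquiv A E A.start E.start → Fintype.card σD ≤ Fintype.card σE) :
    BuchiLang D = CoBuchiLang D ∧ BuchiLang D = BuchiLang A ∧
    (∀ (σB : Type) (_ : Fintype σB) (B : DFA α σB),
      BuchiLang B = CoBuchiLang B → BuchiLang B = BuchiLang A →
      Fintype.card σD ≤ Fintype.card σB) := by
  have hBuchi : BuchiLang D = BuchiLang A := by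
    ext x
    exact (inf_congr (hae x)).symm
  have hCoBuchi : CoBuchiLang D = CoBuchiLang A := by
    ext x
    exact (fin_congr (hae x)).symm
  refine ⟨by rw [hBuchi, hCoBuchi, hA], hBuchi, ?_⟩
  intro σB instB B hB1 hB2
  refine hmin σB instB B ?_
  intro x
  set P : ℕ → Prop := fun n => A.runFrom A.start x n ∈ A.accept with hP
  set Q : ℕ → Prop := fun n => B.runFrom B.start x n ∈ B.accept with hQ
  by_cases hx : {n | P n}.Infinite
  · -- x is Büchi-accepted by A, hence by B; weakness gives co-Büchi acceptance.
    have hxA : x ∈ CoBuchiLang A := hA ▸ hx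
    have hxB : x ∈ CoBuchiLang B := hB1 ▸ (hB2 ▸ hx : x ∈ BuchiLang B)
    refine Set.Finite.subset (hxA.union hxB) ?_
    intro n hn
    simp only [Set.mem_setOf_eq, ne_eq, eq_iff_iff] at hn ⊢
    change ¬ (P n ↔ Q n) at hn
    change ¬ P n ∨ ¬ Q n
    tauto
  · -- x is not Büchi-accepted by A, hence not by B.
    have hxA : {n | P n}.Finite := Set.not_infinite.mp hx
    have hxB : {n | Q n}.Finite := by
      have : x ∉ BuchiLang B := hB2 ▸ hx
      exact Set.not_infinite.mp this
    refine Set.Finite.subset (hxA.union hxB) ?_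
    intro n hn
    simp only [Set.mem_setOf_eq, ne_eq, eq_iff_iff] at hn ⊢
    change ¬ (P n ↔ Q n) at hn
    change P n ∨ Q n
    tauto
end
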